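/- arXiv:1104.5096 — 7 statements merged into one kernel-verified Lean document; each statement's English description precedes it below -/
import Mathlib

section
/- Let b : ℝ^m → ℝ^m satisfy the one-sided Lipschitz condition ⟨x − y, b(x) − b(y)⟩ ≤ C_b |x − y|² for all x, y. Let 𝒪 ⊆ ℝ^m be closed convex, and suppose X, Y : [0,T] → 𝒪 are two absolutely continuous functions satisfying X'(t) = b(X(t)) − k_X(t) and Y'(t) = b(Y(t)) − k_Y(t) a.e., where k_X(t) is in the normal cone of 𝒪 at X(t) and k_Y(t) in the normal cone at Y(t) for a.e. t. Then for all t ∈ [0,T], |X(t) − Y(t)| ≤ e^{C_b t} |X(0) − Y(0)|. -/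
open RealInnerProductSpace MeasureTheory Set

variable {E : Type*} [NormedAddCommGroup E] [InnerProductSpace ℝ E] [CompleteSpace E]

/-- Integrability of `s ↦ ⟪F s, g s⟫` where `F` is the primitive of `g`. -/
lemma integrableOn_inner_primitive (g : ℝ → E) (t : ℝ)
    (hg : IntegrableOn g (Icc 0 t)) :
    IntegrableOn (fun s => ⟪∫ u in Ioc 0 s, g u, g s⟫) (Ioc 0 t) := by
  have hg' : IntegrableOn g (Ioc 0 t) := hg.mono_set Ioc_subset_Icc_self
  have hFcont : ContinuousOn (fun s => ∫ u in Ioc 0 s, g u) (Icc 0 t) :=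
    intervalIntegral.continuousOn_primitive hg
  have hFm : AEStronglyMeasurable (fun s => ∫ u in Ioc 0 s, g u)
      (volume.restrict (Ioc 0 t)) :=
    (hFcont.mono Ioc_subset_Icc_self).aestronglyMeasurable measurableSet_Ioc
  have hgm : AEStronglyMeasurable g (volume.restrict (Ioc 0 t)) := hg'.aestronglyMeasurable
  obtain ⟨M, hM⟩ : ∃ M, ∀ s ∈ Icc 0 t, ‖∫ u in Ioc 0 s, g u‖ ≤ M := by
    rcases isCompact_Icc.exists_bound_of_continuousOn hFcont with ⟨M, hM⟩
    exact ⟨M, hM⟩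
  refine (Integrable.mono' (hg'.norm.const_mul M) (hFm.inner hgm) ?_)
  filter_upwards [ae_restrict_mem measurableSet_Ioc] with s hs
  calc ‖⟪∫ u in Ioc 0 s, g u, g s⟫‖ ≤ ‖∫ u in Ioc 0 s, g u‖ * ‖g s‖ := norm_inner_le_norm _ _
    _ ≤ M * ‖g s‖ :=
        mul_le_mul_of_nonneg_right (hM s ⟨le_of_lt hs.1, hs.2⟩) (norm_nonneg _)

/-- Energy identity: `‖∫₀ᵗ g‖² = 2∫₀ᵗ ⟪F s, g s⟫ ds`. -/
lemma norm_sq_integral_eq (g : ℝ → E) (t : ℝ) (ht : 0 ≤ t)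
    (hg : IntegrableOn g (Icc 0 t)) :
    ‖∫ u in Ioc 0 t, g u‖ ^ 2
      = ∫ s in Ioc 0 t, 2 * ⟪∫ u in Ioc 0 s, g u, g s⟫ := by
  have hg' : IntegrableOn g (Ioc 0 t) := hg.mono_set Ioc_subset_Icc_self
  have hgm : AEStronglyMeasurable g (volume.restrict (Ioc 0 t)) := hg'.aestronglyMeasurable
  set μ := volume.restrict (Ioc (0:ℝ) t) with hμ
  -- the kernel with indicator
  set J : ℝ × ℝ → ℝ := fun p => if p.1 < p.2 then ⟪g p.2, g p.1⟫ else 0 with hJ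
  have hKm : AEStronglyMeasurable (fun p : ℝ × ℝ => (⟪g p.2, g p.1⟫ : ℝ)) (μ.prod μ) := by
    have h1 : AEStronglyMeasurable (fun p : ℝ × ℝ => g p.1) (μ.prod μ) :=
      hgm.comp_quasiMeasurePreserving Measure.quasiMeasurePreserving_fst
    have h2 : AEStronglyMeasurable (fun p : ℝ × ℝ => g p.2) (μ.prod μ) :=
      hgm.comp_quasiMeasurePreserving Measure.quasiMeasurePreserving_snd
    exact h2.inner h1
  have hKint : Integrable (fun p : ℝ × ℝ => (⟪g p.2, g p.1⟫ : ℝ)) (μ.prod μ) := by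
    refine Integrable.mono' (hg'.norm.mul_prod hg'.norm) hKm ?_
    refine Filter.Eventually.of_forall fun p => ?_
    calc ‖(⟪g p.2, g p.1⟫ : ℝ)‖ ≤ ‖g p.2‖ * ‖g p.1‖ := norm_inner_le_norm _ _
      _ = ‖g p.1‖ * ‖g p.2‖ := mul_comm _ _
  have hJint : Integrable J (μ.prod μ) := by
    have : J = Set.indicator {p : ℝ × ℝ | p.1 < p.2}
        (fun p : ℝ × ℝ => (⟪g p.2, g p.1⟫ : ℝ)) := by
      ext p; by_cases h : p.1 < p.2 <;> simp [hJ, h, Set.indicator_apply]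
    rw [this]
    exact hKint.indicator (measurableSet_lt measurable_fst measurable_snd)
  set A := ∫ u in Ioc 0 t, g u with hA
  set F : ℝ → E := fun s => ∫ u in Ioc 0 s, g u with hF
  have hi : ∀ c : E, IntegrableOn (fun u => (⟪g u, c⟫ : ℝ)) (Ioc 0 t) :=
    fun c => hg'.inner_const c
  -- inner integral identities
  have hrow : ∀ s ∈ Ioc (0:ℝ) t, (∫ u, J (s, u) ∂μ) = ∫ u in Ioc s t, ⟪g u, g s⟫ := by
    intro s hs
    have : (fun u => J (s, u)) = Set.indicator (Ioi s) (fun u => (⟪g u, g s⟫ : ℝ)) := by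
      ext u; by_cases h : s < u <;> simp [hJ, h, Set.indicator_apply]
    have hset : Ioi s ∩ Ioc 0 t = Ioc s t := by
      ext u
      simp only [Set.mem_inter_iff, Set.mem_Ioi, Set.mem_Ioc]
      exact ⟨fun h => ⟨h.1, h.2.2⟩, fun h => ⟨h.1, lt_trans hs.1 h.1, h.2⟩⟩
    rw [this, integral_indicator measurableSet_Ioi, hμ,
      Measure.restrict_restrict measurableSet_Ioi, hset]
  have hcol : ∀ u ∈ Ioc (0:ℝ) t, (∫ s, J (s, u) ∂μ) = ⟪F u, g u⟫ := by
    intro u hu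
    have : (fun s => J (s, u)) = Set.indicator (Iio u) (fun s => (⟪g u, g s⟫ : ℝ)) := by
      ext s; by_cases h : s < u <;> simp [hJ, h, Set.indicator_apply]
    rw [this, integral_indicator measurableSet_Iio, hμ, Measure.restrict_restrict measurableSet_Iio]
    have hset : Iio u ∩ Ioc 0 t = Ioo 0 u := by
      ext s
      simp only [Set.mem_inter_iff, Set.mem_Iio, Set.mem_Ioc, Set.mem_Ioo]
      exact ⟨fun h => ⟨h.2.1, h.1⟩, fun h => ⟨h.2, h.1, le_trans (le_of_lt h.2) hu.2⟩⟩
    rw [hset, ← integral_Ioc_eq_integral_Ioo]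
    have : ∀ s, (⟪g u, g s⟫ : ℝ) = ⟪g u, g s⟫ := fun _ => rfl
    calc (∫ s in Ioc 0 u, (⟪g u, g s⟫ : ℝ))
        = ⟪g u, F u⟫ := integral_inner (hg'.mono_set (Ioc_subset_Ioc le_rfl hu.2)) (g u)
      _ = ⟪F u, g u⟫ := real_inner_comm _ _
  have key : ∀ s ∈ Ioc (0:ℝ) t, (⟪A, g s⟫ : ℝ) = ⟪F s, g s⟫ + ∫ u, J (s, u) ∂μ := by
    intro s hs
    have h1 : (⟪A, g s⟫ : ℝ) = ∫ u in Ioc 0 t, ⟪g u, g s⟫ := by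
      rw [real_inner_comm]
      rw [show (⟪g s, A⟫ : ℝ) = ∫ u in Ioc 0 t, ⟪g s, g u⟫ from (integral_inner hg' (g s)).symm]
      exact integral_congr_ae (Filter.Eventually.of_forall fun u => real_inner_comm _ _)
    have hsplit : Ioc (0:ℝ) 0 ∪ Ioc 0 t = Ioc 0 t := by simp
    have : (∫ u in Ioc 0 t, (⟪g u, g s⟫ : ℝ))
        = (∫ u in Ioc 0 s, ⟪g u, g s⟫) + ∫ u in Ioc s t, ⟪g u, g s⟫ := by
      rw [← setIntegral_union (Set.Ioc_disjoint_Ioc_of_le le_rfl) measurableSet_Ioc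
        ((hi (g s)).mono_set (Ioc_subset_Ioc le_rfl hs.2))
        ((hi (g s)).mono_set (Ioc_subset_Ioc (le_of_lt hs.1) le_rfl)),
        Set.Ioc_union_Ioc_eq_Ioc (le_of_lt hs.1) hs.2]
    rw [h1, this, hrow s hs]
    congr 1
    calc (∫ u in Ioc 0 s, (⟪g u, g s⟫ : ℝ))
        = ∫ u in Ioc 0 s, (⟪g s, g u⟫ : ℝ) :=
          integral_congr_ae (Filter.Eventually.of_forall fun u => real_inner_comm _ _)
      _ = ⟪g s, F s⟫ := integral_inner (hg'.mono_set (Ioc_subset_Ioc le_rfl hs.2)) (g s)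
      _ = ⟪F s, g s⟫ := real_inner_comm _ _
  have I1 : Integrable (fun s => (⟪F s, g s⟫ : ℝ)) μ := integrableOn_inner_primitive g t hg
  have I2 : Integrable (fun s => ∫ u, J (s, u) ∂μ) μ := hJint.integral_prod_left
  calc ‖A‖ ^ 2 = ⟪A, A⟫ := (real_inner_self_eq_norm_sq A).symm
    _ = ∫ s, ⟪A, g s⟫ ∂μ := (integral_inner hg' A).symm
    _ = ∫ s, (⟪F s, g s⟫ + ∫ u, J (s, u) ∂μ) ∂μ := by
        refine setIntegral_congr_fun measurableSet_Ioc fun s hs => key s hs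
    _ = (∫ s, (⟪F s, g s⟫ : ℝ) ∂μ) + ∫ s, (∫ u, J (s, u) ∂μ) ∂μ := integral_add I1 I2
    _ = (∫ s, (⟪F s, g s⟫ : ℝ) ∂μ) + ∫ u, (∫ s, J (s, u) ∂μ) ∂μ := by
        rw [integral_integral_swap hJint]
    _ = (∫ s, (⟪F s, g s⟫ : ℝ) ∂μ) + ∫ u, (⟪F u, g u⟫ : ℝ) ∂μ := by
        congr 1
        exact setIntegral_congr_fun measurableSet_Ioc fun u hu => hcol u hu
    _ = ∫ s, 2 * (⟪F s, g s⟫ : ℝ) ∂μ := by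
        rw [MeasureTheory.integral_const_mul]; ring

set_option maxHeartbeats 1000000

/-- One-sided Lipschitz drift with normal-cone reflection: contraction estimate
`|X(t) − Y(t)| ≤ e^{C_b t}|X(0) − Y(0)|`. -/
theorem reflected_ode_contraction
    (m : ℕ) (T Cb : ℝ) (hT : 0 < T)
    (b : EuclideanSpace ℝ (Fin m) → EuclideanSpace ℝ (Fin m))
    (hb : ∀ x y, ⟪x - y, b x - b y⟫ ≤ Cb * ‖x - y‖ ^ 2)
    (O : Set (EuclideanSpace ℝ (Fin m))) (hclosed : IsClosed O) (hconv : Convex ℝ O)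
    (X Y kX kY : ℝ → EuclideanSpace ℝ (Fin m))
    (hXO : ∀ t ∈ Set.Icc 0 T, X t ∈ O) (hYO : ∀ t ∈ Set.Icc 0 T, Y t ∈ O)
    (hXint : IntervalIntegrable (fun s => b (X s) - kX s) volume 0 T)
    (hYint : IntervalIntegrable (fun s => b (Y s) - kY s) volume 0 T)
    (hX : ∀ t ∈ Set.Icc 0 T, X t = X 0 + ∫ s in (0:ℝ)..t, (b (X s) - kX s))
    (hY : ∀ t ∈ Set.Icc 0 T, Y t = Y 0 + ∫ s in (0:ℝ)..t, (b (Y s) - kY s))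
    (hkX : ∀ᵐ t ∂(volume.restrict (Set.Icc (0:ℝ) T)), ∀ z ∈ O, ⟪kX t, X t - z⟫ ≥ 0)
    (hkY : ∀ᵐ t ∂(volume.restrict (Set.Icc (0:ℝ) T)), ∀ z ∈ O, ⟪kY t, Y t - z⟫ ≥ 0) :
    ∀ t ∈ Set.Icc 0 T, ‖X t - Y t‖ ≤ Real.exp (Cb * t) * ‖X 0 - Y 0‖ := by
  have hTle : (0:ℝ) ≤ T := le_of_lt hT
  set D : ℝ → EuclideanSpace ℝ (Fin m) := fun s => X s - Y s with hDdef
  set g : ℝ → EuclideanSpace ℝ (Fin m) :=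
    fun s => (b (X s) - kX s) - (b (Y s) - kY s) with hgdef
  have hgint : IntervalIntegrable g volume 0 T := hXint.sub hYint
  have hgT : IntegrableOn g (Ioc 0 T) :=
    (intervalIntegrable_iff_integrableOn_Ioc_of_le hTle).1 hgint
  have hgIcc : ∀ r, r ≤ T → IntegrableOn g (Icc 0 r) := by
    intro r hr
    rw [integrableOn_Icc_iff_integrableOn_Ioc]
    exact hgT.mono_set (Ioc_subset_Ioc le_rfl hr)
  set F : ℝ → EuclideanSpace ℝ (Fin m) := fun r => ∫ u in Ioc 0 r, g u with hFdef
  have hDeq : ∀ r ∈ Icc (0:ℝ) T, D r = D 0 + F r := by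
    intro r hr
    have hsub : uIcc (0:ℝ) r ⊆ uIcc (0:ℝ) T := by
      rw [uIcc_of_le hr.1, uIcc_of_le hTle]; exact Icc_subset_Icc le_rfl hr.2
    have hiX : IntervalIntegrable (fun s => b (X s) - kX s) volume 0 r := hXint.mono_set hsub
    have hiY : IntervalIntegrable (fun s => b (Y s) - kY s) volume 0 r := hYint.mono_set hsub
    have : D r = D 0 + ∫ s in (0:ℝ)..r, g s := by
      simp only [hDdef]
      rw [hX r hr, hY r hr, intervalIntegral.integral_sub hiX hiY]
      abel
    rwa [intervalIntegral.integral_of_le hr.1] at this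
  set φ : ℝ → ℝ := fun r => ‖D r‖ ^ 2 with hφdef
  set h : ℝ → ℝ := fun s => 2 * ⟪D s, g s⟫ with hhdef
  -- energy identity
  have hφeq : ∀ r ∈ Icc (0:ℝ) T, φ r = φ 0 + ∫ s in Ioc 0 r, h s := by
    intro r hr
    have hg' : IntegrableOn g (Ioc 0 r) := hgT.mono_set (Ioc_subset_Ioc le_rfl hr.2)
    have e1 : φ r = ‖D 0‖ ^ 2 + 2 * ⟪D 0, F r⟫ + ‖F r‖ ^ 2 := by
      simp only [hφdef]; rw [hDeq r hr]; exact norm_add_sq_real _ _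
    have e2 : (2:ℝ) * ⟪D 0, F r⟫ = ∫ s in Ioc 0 r, 2 * ⟪D 0, g s⟫ := by
      rw [MeasureTheory.integral_const_mul, integral_inner hg']
    have e3 : ‖F r‖ ^ 2 = ∫ s in Ioc 0 r, 2 * ⟪F s, g s⟫ :=
      norm_sq_integral_eq g r hr.1 (hgIcc r hr.2)
    have i1 : IntegrableOn (fun s => 2 * (⟪D 0, g s⟫:ℝ)) (Ioc 0 r) :=
      (Integrable.const_inner (D 0) hg').const_mul 2
    have i2 : IntegrableOn (fun s => 2 * (⟪F s, g s⟫:ℝ)) (Ioc 0 r) :=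
      (integrableOn_inner_primitive g r (hgIcc r hr.2)).const_mul 2
    rw [e1, e2, e3, add_assoc, ← integral_add i1 i2]
    congr 1
    refine setIntegral_congr_fun measurableSet_Ioc fun s hs => ?_
    have hDs : D s = D 0 + F s := hDeq s ⟨le_of_lt hs.1, le_trans hs.2 hr.2⟩
    simp only [hhdef, hDs, inner_add_left]
    ring
  -- integrability of h
  have hhint : IntegrableOn h (Ioc 0 T) := by
    refine Integrable.congr (((Integrable.const_inner (D 0) hgT).const_mul 2).add
      ((integrableOn_inner_primitive g T (hgIcc T le_rfl)).const_mul 2)) ?_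
    filter_upwards [ae_restrict_mem measurableSet_Ioc] with s hs
    have hDs : D s = D 0 + F s := hDeq s ⟨le_of_lt hs.1, hs.2⟩
    simp only [Pi.add_apply, hhdef, hDs, inner_add_left]
    ring
  -- continuity of φ on [0, T]
  have hFcont : ContinuousOn F (Icc 0 T) :=
    intervalIntegral.continuousOn_primitive (hgIcc T le_rfl)
  have hφcont : ContinuousOn φ (Icc 0 T) := by
    have : ContinuousOn (fun r => ‖D 0 + F r‖ ^ 2) (Icc 0 T) :=
      ((continuousOn_const.add hFcont).norm).pow 2
    exact this.congr fun r hr => by simp only [hφdef]; rw [hDeq r hr]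
  -- a.e. differential inequality
  have hae : ∀ᵐ s ∂(volume.restrict (Icc (0:ℝ) T)), h s ≤ 2 * Cb * φ s := by
    filter_upwards [hkX, hkY, ae_restrict_mem measurableSet_Icc] with s h1 h2 hs
    have e1 : (0:ℝ) ≤ ⟪kX s, X s - Y s⟫ := h1 (Y s) (hYO s hs)
    have e2 : (0:ℝ) ≤ ⟪kY s, Y s - X s⟫ := h2 (X s) (hXO s hs)
    have e3 := hb (X s) (Y s)
    have expand : (⟪D s, g s⟫:ℝ)
        = ⟪X s - Y s, b (X s) - b (Y s)⟫ - ⟪kX s, X s - Y s⟫ - ⟪kY s, Y s - X s⟫ := by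
      have hrw : g s = (b (X s) - b (Y s)) - kX s + kY s := by
        simp only [hgdef]; abel
      have hD' : D s = X s - Y s := rfl
      rw [hrw, inner_add_right, inner_sub_right, hD']
      have c1 : (⟪X s - Y s, kX s⟫:ℝ) = ⟪kX s, X s - Y s⟫ := real_inner_comm _ _
      have c2 : (⟪X s - Y s, kY s⟫:ℝ) = -⟪kY s, Y s - X s⟫ := by
        rw [real_inner_comm, show Y s - X s = -(X s - Y s) by abel, inner_neg_right]
        ring
      rw [c1, c2]
      ring
    have : (⟪D s, g s⟫:ℝ) ≤ Cb * ‖D s‖ ^ 2 := by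
      rw [expand]; simp only [hDdef]; linarith
    simp only [hhdef, hφdef]; linarith
  -- Grönwall
  have hbound : ∀ x ∈ Ico (0:ℝ) T, 2 * Cb * φ x ≤ 2 * Cb * φ x + 0 := fun x _ => by simp
  have hslope : ∀ x ∈ Ico (0:ℝ) T, ∀ r, 2 * Cb * φ x < r →
      ∃ᶠ z in nhdsWithin x (Ioi x), (z - x)⁻¹ * (φ z - φ x) < r := by
    intro x hx r hr
    set r' := (2 * Cb * φ x + r) / 2 with hr'def
    have hr1 : 2 * Cb * φ x < r' := by rw [hr'def]; linarith
    have hr2 : r' < r := by rw [hr'def]; linarith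
    have hψ : ContinuousWithinAt (fun s => 2 * Cb * φ s) (Icc 0 T) x :=
      (continuousOn_const.mul hφcont) x ⟨hx.1, le_of_lt hx.2⟩
    have hev : ∀ᶠ s in nhdsWithin x (Icc 0 T), 2 * Cb * φ s < r' :=
      hψ.eventually_lt_const hr1
    obtain ⟨ε, hε, hball⟩ := Metric.mem_nhdsWithin_iff.1 hev
    set c := min (x + ε) T with hcdef
    have hc : x < c := lt_min (by linarith) hx.2
    have hsub : Ioo x c ⊆ {z | (z - x)⁻¹ * (φ z - φ x) < r} := by
      intro z hz
      have hzx : 0 < z - x := by simp only [sub_pos]; exact hz.1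
      have hzT : z ≤ T := le_of_lt (lt_of_lt_of_le hz.2 (min_le_right _ _))
      have hzI : z ∈ Icc (0:ℝ) T := ⟨le_trans hx.1 (le_of_lt hz.1), hzT⟩
      -- φ z - φ x = ∫_{(x,z]} h
      have hsplit : (∫ s in Ioc 0 z, h s)
          = (∫ s in Ioc 0 x, h s) + ∫ s in Ioc x z, h s := by
        rw [← setIntegral_union (Ioc_disjoint_Ioc_of_le le_rfl) measurableSet_Ioc
          (hhint.mono_set (Ioc_subset_Ioc le_rfl (le_of_lt hx.2)))
          (hhint.mono_set (Ioc_subset_Ioc hx.1 hzT)),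
          Ioc_union_Ioc_eq_Ioc hx.1 (le_of_lt hz.1)]
      have hdiff : φ z - φ x = ∫ s in Ioc x z, h s := by
        rw [hφeq z hzI, hφeq x ⟨hx.1, le_of_lt hx.2⟩, hsplit]; ring
      -- bound the integral by r' * (z - x)
      have haeloc : ∀ᵐ s ∂(volume.restrict (Ioc x z)), h s ≤ r' := by
        have h1 : ∀ᵐ s ∂(volume.restrict (Ioc x z)), h s ≤ 2 * Cb * φ s :=
          ae_restrict_of_ae_restrict_of_subset
            (show Ioc x z ⊆ Icc 0 T from
              fun s hs => ⟨le_trans hx.1 (le_of_lt hs.1), le_trans hs.2 hzT⟩) hae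
        filter_upwards [h1, ae_restrict_mem measurableSet_Ioc] with s hs1 hs2
        have hsI : s ∈ Icc (0:ℝ) T := ⟨le_trans hx.1 (le_of_lt hs2.1), le_trans hs2.2 hzT⟩
        have hdist : dist s x < ε := by
          rw [Real.dist_eq, abs_of_nonneg (by linarith [hs2.1])]
          have : z < x + ε := lt_of_lt_of_le hz.2 (min_le_left _ _)
          linarith [hs2.2]
        exact le_of_lt (lt_of_le_of_lt hs1 (hball ⟨Metric.mem_ball.2 hdist, hsI⟩))
      have hint1 : IntegrableOn h (Ioc x z) := hhint.mono_set (Ioc_subset_Ioc hx.1 hzT)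
      have hint2 : IntegrableOn (fun _ => r') (Ioc x z) :=
        integrableOn_const measure_Ioc_lt_top.ne
      have hle : (∫ s in Ioc x z, h s) ≤ r' * (z - x) := by
        calc (∫ s in Ioc x z, h s) ≤ ∫ _ in Ioc x z, r' :=
              integral_mono_ae hint1 hint2 haeloc
          _ = r' * (z - x) := by
              rw [setIntegral_const, Real.volume_real_Ioc_of_le (le_of_lt hz.1)]
              simp [mul_comm]
      have : (z - x)⁻¹ * (φ z - φ x) ≤ r' := by
        rw [hdiff]
        calc (z - x)⁻¹ * ∫ s in Ioc x z, h s ≤ (z - x)⁻¹ * (r' * (z - x)) :=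
              mul_le_mul_of_nonneg_left hle (le_of_lt (inv_pos.2 hzx))
          _ = r' := by field_simp
      exact lt_of_le_of_lt this hr2
    exact Filter.Eventually.frequently
      (Filter.mem_of_superset (Ioo_mem_nhdsGT_of_mem ⟨le_refl x, hc⟩) hsub)
  intro t ht
  have key := le_gronwallBound_of_liminf_deriv_right_le
    (f := φ) (f' := fun s => 2 * Cb * φ s) (δ := φ 0) (K := 2 * Cb) (ε := 0)
    (a := 0) (b := T) hφcont hslope le_rfl hbound t ht
  rw [sub_zero, gronwallBound_ε0] at key
  have hsq : φ 0 * Real.exp (2 * Cb * t) = (Real.exp (Cb * t) * ‖D 0‖) ^ 2 := by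
    simp only [hφdef]
    rw [show (2 * Cb * t) = Cb * t + Cb * t by ring, Real.exp_add]
    ring
  rw [hsq] at key
  have := Real.sqrt_le_sqrt key
  rwa [Real.sqrt_sq (norm_nonneg _), Real.sqrt_sq (by positivity)] at this
end

section
/- Let σ : ℝ^m → L(ℝ^d, ℝ^m) be Lipschitz with constant C_σ, let X : [0,T] → ℝ^m be continuous, and let ḣ_n ∈ L²(0,T; ℝ^d) converge weakly in L² to ḣ. Then w_n(t) = ∫₀^t σ(X(s))(ḣ_n(s) − ḣ(s)) ds converges to 0 uniformly on [0,T]. -/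
open RealInnerProductSpace MeasureTheory Filter

set_option maxHeartbeats 1000000 in
/-- If `ḣ_n → ḣ` weakly in `L²(0,T;ℝᵈ)`, then
`w_n(t) = ∫₀ᵗ σ(X(s))(ḣ_n(s) − ḣ(s)) ds → 0` uniformly on `[0,T]`. -/
theorem weak_convergence_gives_uniform_convergence
    (m d : ℕ) (T Cσ : ℝ) (hT : 0 < T)
    (σ : EuclideanSpace ℝ (Fin m) → (EuclideanSpace ℝ (Fin d) →L[ℝ] EuclideanSpace ℝ (Fin m)))
    (hσ : LipschitzWith (Real.toNNReal Cσ) σ)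
    (X : ℝ → EuclideanSpace ℝ (Fin m)) (hX : ContinuousOn X (Set.Icc 0 T))
    (hn : ℕ → ℝ → EuclideanSpace ℝ (Fin d)) (h : ℝ → EuclideanSpace ℝ (Fin d))
    (hhn : ∀ n, MemLp (hn n) 2 (volume.restrict (Set.Icc (0:ℝ) T)))
    (hh : MemLp h 2 (volume.restrict (Set.Icc (0:ℝ) T)))
    (hweak : ∀ g : ℝ → EuclideanSpace ℝ (Fin d),
      MemLp g 2 (volume.restrict (Set.Icc (0:ℝ) T)) →
      Tendsto (fun n => ∫ s in Set.Icc (0:ℝ) T, ⟪hn n s, g s⟫) atTop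
        (nhds (∫ s in Set.Icc (0:ℝ) T, ⟪h s, g s⟫))) :
    TendstoUniformlyOn (fun n t => ∫ s in (0:ℝ)..t, σ (X s) (hn n s - h s))
      (fun _ => 0) atTop (Set.Icc 0 T) := by
  classical
  set μ : Measure ℝ := volume.restrict (Set.Icc (0:ℝ) T) with hμdef
  haveI : IsFiniteMeasure μ := by
    constructor
    rw [hμdef, Measure.restrict_apply_univ]
    simp [Real.volume_Icc]
  set f : ℕ → ℝ → EuclideanSpace ℝ (Fin d) := fun n s => hn n s - h s with hfdef
  have hf : ∀ n, MemLp (f n) 2 μ := fun n => (hhn n).sub hh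
  set A : ℝ → (EuclideanSpace ℝ (Fin d) →L[ℝ] EuclideanSpace ℝ (Fin m)) :=
    fun s => σ (X s) with hAdef
  have hA : ContinuousOn A (Set.Icc 0 T) := hσ.continuous.comp_continuousOn hX
  obtain ⟨C, hC⟩ := isCompact_Icc.exists_bound_of_continuousOn hA
  set K := max C 0 with hKdef
  have hK0 : (0:ℝ) ≤ K := le_max_right _ _
  have hK : ∀ s ∈ Set.Icc (0:ℝ) T, ‖A s‖ ≤ K := fun s hs => (hC s hs).trans (le_max_left _ _)
  have hAm : AEStronglyMeasurable A μ := hA.aestronglyMeasurable measurableSet_Icc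
  have hGm : ∀ n, AEStronglyMeasurable (fun s => A s (f n s)) μ := fun n =>
    isBoundedBilinearMap_apply.continuous.comp_aestronglyMeasurable (hAm.prodMk (hf n).1)
  have hfi : ∀ n, Integrable (f n) μ := fun n => (hf n).integrable one_le_two
  have hGi : ∀ n, Integrable (fun s => A s (f n s)) μ := by
    intro n
    refine Integrable.mono' ((hfi n).norm.const_mul K) (hGm n) ?_
    filter_upwards [ae_restrict_mem measurableSet_Icc] with s hs
    exact le_trans ((A s).le_opNorm _)
      (mul_le_mul_of_nonneg_right (hK s hs) (norm_nonneg _))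
  -- weak convergence of the differences against any L² test function
  have key : ∀ g : ℝ → EuclideanSpace ℝ (Fin d), MemLp g 2 μ →
      Tendsto (fun n => ∫ s, ⟪f n s, g s⟫ ∂μ) atTop (nhds 0) := by
    intro g hg
    have hint : ∀ (u : ℝ → EuclideanSpace ℝ (Fin d)), MemLp u 2 μ →
        Integrable (fun s => ⟪u s, g s⟫) μ := by
      intro u hu
      have h2 := L2.integrable_inner (𝕜 := ℝ) (hu.toLp u) (hg.toLp g)
      refine h2.congr ?_
      filter_upwards [hu.coeFn_toLp, hg.coeFn_toLp] with s h1 h2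
      rw [h1, h2]
    have heq : ∀ n, ∫ s, ⟪f n s, g s⟫ ∂μ
        = (∫ s, ⟪hn n s, g s⟫ ∂μ) - ∫ s, ⟪h s, g s⟫ ∂μ := by
      intro n
      rw [← integral_sub (hint _ (hhn n)) (hint _ hh)]
      refine integral_congr_ae (Eventually.of_forall fun s => ?_)
      simp [hfdef, inner_sub_left]
    simp only [heq]
    have h3 := (hweak g hg).sub_const (∫ s, ⟪h s, g s⟫ ∂μ)
    simpa using h3
  -- uniform L² bound via Banach–Steinhaus
  obtain ⟨M, hM0, hM⟩ : ∃ M : ℝ, 0 ≤ M ∧ ∀ n, eLpNorm (f n) 2 μ ≤ ENNReal.ofReal M := by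
    set F : ℕ → (Lp (EuclideanSpace ℝ (Fin d)) 2 μ) →L[ℝ] ℝ :=
      fun n => innerSL ℝ ((hf n).toLp (f n)) with hF
    have hptb : ∀ g : Lp (EuclideanSpace ℝ (Fin d)) 2 μ, ∃ C0, ∀ n, ‖F n g‖ ≤ C0 := by
      intro g
      have hTend : Tendsto (fun n => ∫ s, ⟪f n s, (g : ℝ → EuclideanSpace ℝ (Fin d)) s⟫ ∂μ)
          atTop (nhds 0) := key _ (Lp.memLp g)
      have hFg : ∀ n, F n g = ∫ s, ⟪f n s, (g : ℝ → EuclideanSpace ℝ (Fin d)) s⟫ ∂μ := by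
        intro n
        rw [hF]
        simp only [innerSL_apply_apply]
        rw [L2.inner_def]
        refine integral_congr_ae ?_
        filter_upwards [(hf n).coeFn_toLp] with s hs
        rw [hs]
      obtain ⟨C0, hC0⟩ := hTend.norm.bddAbove_range
      refine ⟨C0, fun n => ?_⟩
      rw [hFg n]
      exact hC0 (Set.mem_range_self n)
    obtain ⟨C', hC'⟩ := banach_steinhaus hptb
    refine ⟨max C' 0, le_max_right _ _, fun n => ?_⟩
    have h1 : ‖F n‖ = (eLpNorm (f n) 2 μ).toReal := by
      rw [hF]
      simp only []
      rw [innerSL_apply_norm]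
      exact Lp.norm_toLp _ _
    refine (ENNReal.le_ofReal_iff_toReal_le (hf n).2.ne (le_max_right _ _)).mpr ?_
    calc (eLpNorm (f n) 2 μ).toReal = ‖F n‖ := h1.symm
      _ ≤ C' := hC' n
      _ ≤ max C' 0 := le_max_left _ _
  -- Cauchy–Schwarz / Hölder on subintervals
  have hIoc : ∀ n, ∀ a b : ℝ, 0 ≤ a → b ≤ T →
      ∫ s in Set.Ioc a b, ‖f n s‖ ≤ M * Real.sqrt (b - a) := by
    intro n a b ha hb
    rcases le_or_gt b a with hba | hab
    · rw [Set.Ioc_eq_empty (not_lt.mpr hba)]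
      simp only [Measure.restrict_empty, integral_zero_measure]
      positivity
    · have hsub : Set.Ioc a b ⊆ Set.Icc 0 T := fun s hs =>
        ⟨le_trans ha hs.1.le, le_trans hs.2 hb⟩
      have hνμ : volume.restrict (Set.Ioc a b) ≤ μ := by
        rw [hμdef]; exact Measure.restrict_mono hsub le_rfl
      have hm2 : MemLp (f n) 2 (volume.restrict (Set.Ioc a b)) := (hf n).mono_measure hνμ
      haveI : IsFiniteMeasure (volume.restrict (Set.Ioc a b)) := by
        constructor
        rw [Measure.restrict_apply_univ]
        simp [Real.volume_Ioc]
      have hm1 : MemLp (f n) 1 (volume.restrict (Set.Ioc a b)) :=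
        hm2.mono_exponent one_le_two
      have hi1 : Integrable (f n) (volume.restrict (Set.Ioc a b)) :=
        memLp_one_iff_integrable.mp hm1
      have e1 : ENNReal.ofReal (∫ s in Set.Ioc a b, ‖f n s‖)
          = eLpNorm (f n) 1 (volume.restrict (Set.Ioc a b)) := by
        rw [ofReal_integral_norm_eq_lintegral_enorm hi1, eLpNorm_one_eq_lintegral_enorm]
      have e2 : eLpNorm (f n) 1 (volume.restrict (Set.Ioc a b))
          ≤ ENNReal.ofReal (M * Real.sqrt (b - a)) := by
        have h4 := eLpNorm_le_eLpNorm_mul_rpow_measure_univ (μ := volume.restrict (Set.Ioc a b))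
          (p := 1) (q := 2) one_le_two hm2.1
        have h5 : (volume.restrict (Set.Ioc a b)) Set.univ = ENNReal.ofReal (b - a) := by
          rw [Measure.restrict_apply_univ]
          simp [Real.volume_Ioc]
        rw [h5] at h4
        have hexp : (1:ℝ) / ENNReal.toReal 1 - 1 / ENNReal.toReal 2 = (1:ℝ)/2 := by
          simp
          norm_num
        rw [hexp] at h4
        refine h4.trans ?_
        have h6 : eLpNorm (f n) 2 (volume.restrict (Set.Ioc a b)) ≤ ENNReal.ofReal M :=
          (eLpNorm_mono_measure _ hνμ).trans (hM n)
        have h7 : (ENNReal.ofReal (b - a)) ^ ((1:ℝ)/2)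
            = ENNReal.ofReal (Real.sqrt (b - a)) := by
          rw [ENNReal.ofReal_rpow_of_nonneg (by linarith) (by norm_num),
            Real.sqrt_eq_rpow]
        rw [h7, ENNReal.ofReal_mul hM0]
        exact mul_le_mul' h6 le_rfl
      have e3 : ENNReal.ofReal (∫ s in Set.Ioc a b, ‖f n s‖)
          ≤ ENNReal.ofReal (M * Real.sqrt (b - a)) := e1 ▸ e2
      exact (ENNReal.ofReal_le_ofReal_iff (by positivity)).mp e3
  -- the basic increment bound
  have hw : ∀ n, ∀ a b : ℝ, 0 ≤ a → b ≤ T →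
      ‖∫ s in Set.Ioc a b, A s (f n s)‖ ≤ K * M * Real.sqrt (b - a) := by
    intro n a b ha hb
    rcases le_or_gt b a with hba | hab
    · rw [Set.Ioc_eq_empty (not_lt.mpr hba)]
      simp only [Measure.restrict_empty, integral_zero_measure, norm_zero]
      positivity
    · have hsub : Set.Ioc a b ⊆ Set.Icc 0 T := fun s hs =>
        ⟨le_trans ha hs.1.le, le_trans hs.2 hb⟩
      have hνμ : volume.restrict (Set.Ioc a b) ≤ μ := by
        rw [hμdef]; exact Measure.restrict_mono hsub le_rfl
      have hGiab : Integrable (fun s => A s (f n s)) (volume.restrict (Set.Ioc a b)) :=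
        (hGi n).mono_measure hνμ
      have hfiab : Integrable (fun s => K * ‖f n s‖) (volume.restrict (Set.Ioc a b)) :=
        ((hfi n).mono_measure hνμ).norm.const_mul K
      calc ‖∫ s in Set.Ioc a b, A s (f n s)‖ ≤ ∫ s in Set.Ioc a b, ‖A s (f n s)‖ :=
            norm_integral_le_integral_norm _
        _ ≤ ∫ s in Set.Ioc a b, K * ‖f n s‖ := by
            refine integral_mono_ae hGiab.norm hfiab ?_
            filter_upwards [ae_restrict_mem measurableSet_Ioc] with s hs
            exact le_trans ((A s).le_opNorm _)
              (mul_le_mul_of_nonneg_right (hK s (hsub hs)) (norm_nonneg _))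
        _ = K * ∫ s in Set.Ioc a b, ‖f n s‖ := integral_const_mul _ _
        _ ≤ K * (M * Real.sqrt (b - a)) :=
            mul_le_mul_of_nonneg_left (hIoc n a b ha hb) hK0
        _ = K * M * Real.sqrt (b - a) := (mul_assoc _ _ _).symm
  -- pointwise convergence
  have hpt : ∀ t, t ∈ Set.Icc (0:ℝ) T →
      Tendsto (fun n => ∫ s in Set.Ioc (0:ℝ) t, A s (f n s)) atTop (nhds 0) := by
    intro t ht
    have hsub : Set.Ioc (0:ℝ) t ⊆ Set.Icc 0 T := fun s hs => ⟨hs.1.le, hs.2.trans ht.2⟩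
    have hνμ : volume.restrict (Set.Ioc (0:ℝ) t) ≤ μ := by
      rw [hμdef]; exact Measure.restrict_mono hsub le_rfl
    have hcoord : ∀ i : Fin m,
        Tendsto (fun n => (∫ s in Set.Ioc (0:ℝ) t, A s (f n s)) i) atTop (nhds 0) := by
      intro i
      set v : EuclideanSpace ℝ (Fin m) := EuclideanSpace.single i (1:ℝ) with hv
      set g : ℝ → EuclideanSpace ℝ (Fin d) :=
        (Set.Ioc (0:ℝ) t).indicator (fun s => (ContinuousLinearMap.adjoint (A s)) v) with hg
      have hadjc : Continuous (fun B : EuclideanSpace ℝ (Fin d) →L[ℝ] EuclideanSpace ℝ (Fin m)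
          => ContinuousLinearMap.adjoint B) :=
        (ContinuousLinearMap.adjoint (𝕜 := ℝ) (E := EuclideanSpace ℝ (Fin d))
          (F := EuclideanSpace ℝ (Fin m))).continuous
      have hadj : ContinuousOn (fun s => ContinuousLinearMap.adjoint (A s)) (Set.Icc 0 T) :=
        hadjc.comp_continuousOn hA
      have hgc : ContinuousOn (fun s => (ContinuousLinearMap.adjoint (A s)) v)
          (Set.Icc 0 T) := hadj.clm_apply continuousOn_const
      have hgm : MemLp g 2 μ := by
        refine MemLp.of_bound
          (((hgc.aestronglyMeasurable measurableSet_Icc)).indicator measurableSet_Ioc) K ?_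
        filter_upwards [ae_restrict_mem measurableSet_Icc] with s hs
        rw [hg]
        by_cases hmem : s ∈ Set.Ioc (0:ℝ) t
        · rw [Set.indicator_of_mem hmem]
          calc ‖(ContinuousLinearMap.adjoint (A s)) v‖
              ≤ ‖ContinuousLinearMap.adjoint (A s)‖ * ‖v‖ :=
                (ContinuousLinearMap.adjoint (A s)).le_opNorm v
            _ = ‖A s‖ * 1 := by
                rw [LinearIsometryEquiv.norm_map, hv, EuclideanSpace.norm_single, norm_one]
            _ = ‖A s‖ := mul_one _
            _ ≤ K := hK s hs
        · rw [Set.indicator_of_notMem hmem]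
          simpa using hK0
      have hkey := key g hgm
      have heq : ∀ n, ∫ s, ⟪f n s, g s⟫ ∂μ = (∫ s in Set.Ioc (0:ℝ) t, A s (f n s)) i := by
        intro n
        have h1 : (fun s => ⟪f n s, g s⟫) = (Set.Ioc (0:ℝ) t).indicator
            (fun s => ⟪f n s, (ContinuousLinearMap.adjoint (A s)) v⟫) := by
          funext s
          rw [hg]
          by_cases hmem : s ∈ Set.Ioc (0:ℝ) t
          · rw [Set.indicator_of_mem hmem, Set.indicator_of_mem hmem]
          · rw [Set.indicator_of_notMem hmem, Set.indicator_of_notMem hmem, inner_zero_right]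
        rw [h1, integral_indicator measurableSet_Ioc, hμdef,
          Measure.restrict_restrict measurableSet_Ioc,
          Set.inter_eq_self_of_subset_left hsub]
        have h2 : ∀ s, ⟪f n s, (ContinuousLinearMap.adjoint (A s)) v⟫ = (A s (f n s)) i := by
          intro s
          rw [ContinuousLinearMap.adjoint_inner_right, hv, EuclideanSpace.inner_single_right]
          simp
        simp_rw [h2]
        have h3 := (EuclideanSpace.proj (𝕜 := ℝ) i).integral_comp_comm
          ((hGi n).mono_measure hνμ)
        simpa using h3
      exact Tendsto.congr heq hkey
    set e := EuclideanSpace.equiv (Fin m) ℝ with he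
    have h4 : Tendsto (fun n => e (∫ s in Set.Ioc (0:ℝ) t, A s (f n s))) atTop (nhds 0) := by
      rw [tendsto_pi_nhds]
      intro i
      exact hcoord i
    have h5 := (e.symm.continuous.tendsto 0).comp h4
    rw [map_zero] at h5
    exact h5.congr (fun n => e.symm_apply_apply _)
  -- final assembly via a grid argument
  rw [Metric.tendstoUniformlyOn_iff]
  intro ε hε
  set KM := K * M + 1 with hKM
  have hKM0 : (0:ℝ) < KM := by positivity
  set δ := (ε / (3 * KM))^2 with hδ
  have hδ0 : (0:ℝ) < δ := by positivity
  have hsqrtδ : Real.sqrt δ = ε / (3 * KM) := by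
    rw [hδ, Real.sqrt_sq (by positivity)]
  set J := Nat.floor (T / δ) with hJ
  have hgrid : ∀ j : ℕ, j ≤ J → δ * j ∈ Set.Icc (0:ℝ) T := by
    intro j hj
    constructor
    · positivity
    · have h1 : (j:ℝ) ≤ T / δ := le_trans (Nat.cast_le.mpr hj) (Nat.floor_le (by positivity))
      calc δ * j ≤ δ * (T / δ) := mul_le_mul_of_nonneg_left h1 hδ0.le
        _ = T := by field_simp
  have hev : ∀ᶠ n in atTop, ∀ j ∈ Finset.range (J+1),
      ‖∫ s in Set.Ioc (0:ℝ) (δ * (j:ℝ)), A s (f n s)‖ < ε/3 := by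
    rw [eventually_all_finset]
    intro j hj
    have hmem := hgrid j (Nat.lt_succ_iff.mp (Finset.mem_range.mp hj))
    have h6 := NormedAddCommGroup.tendsto_nhds_zero.mp (hpt (δ * j) hmem)
    exact h6 (ε/3) (by positivity)
  filter_upwards [hev] with n hnn t ht
  show dist 0 (∫ s in (0:ℝ)..t, A s (f n s)) < ε
  rw [dist_zero_left, intervalIntegral.integral_of_le ht.1]
  set j := Nat.floor (t / δ) with hj
  have hjJ : j ≤ J := Nat.floor_le_floor ((div_le_div_iff_of_pos_right hδ0).mpr ht.2)
  set a := δ * (j:ℝ) with ha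
  have haT : a ∈ Set.Icc (0:ℝ) T := hgrid j hjJ
  have ha0 : (0:ℝ) ≤ a := haT.1
  have hat : a ≤ t := by
    have h1 : (j:ℝ) ≤ t / δ := Nat.floor_le (div_nonneg ht.1 hδ0.le)
    calc a = δ * (j:ℝ) := rfl
      _ ≤ δ * (t / δ) := mul_le_mul_of_nonneg_left h1 hδ0.le
      _ = t := by field_simp
  have hta : t - a ≤ δ := by
    have h1 : t / δ < (j:ℝ) + 1 := Nat.lt_floor_add_one (t / δ)
    have h2 : t < ((j:ℝ) + 1) * δ := (div_lt_iff₀ hδ0).mp h1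
    rw [ha]
    nlinarith
  have hsub1 : Set.Ioc (0:ℝ) a ⊆ Set.Icc 0 T := fun s hs => ⟨hs.1.le, hs.2.trans haT.2⟩
  have hsub2 : Set.Ioc a t ⊆ Set.Icc 0 T := fun s hs =>
    ⟨le_trans ha0 hs.1.le, hs.2.trans ht.2⟩
  have hsplit : ∫ s in Set.Ioc (0:ℝ) t, A s (f n s)
      = (∫ s in Set.Ioc (0:ℝ) a, A s (f n s)) + ∫ s in Set.Ioc a t, A s (f n s) := by
    rw [← Set.Ioc_union_Ioc_eq_Ioc ha0 hat]
    refine setIntegral_union (Set.Ioc_disjoint_Ioc_of_le le_rfl) measurableSet_Ioc ?_ ?_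
    · exact (hGi n).mono_measure (hμdef ▸ Measure.restrict_mono hsub1 le_rfl)
    · exact (hGi n).mono_measure (hμdef ▸ Measure.restrict_mono hsub2 le_rfl)
  have hterm1 : ‖∫ s in Set.Ioc (0:ℝ) a, A s (f n s)‖ < ε/3 :=
    hnn j (Finset.mem_range.mpr (Nat.lt_succ_of_le hjJ))
  have hterm2 : ‖∫ s in Set.Ioc a t, A s (f n s)‖ ≤ ε/3 := by
    refine (hw n a t ha0 ht.2).trans ?_
    have h1 : Real.sqrt (t - a) ≤ Real.sqrt δ := Real.sqrt_le_sqrt hta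
    have h2 : K * M * Real.sqrt (t - a) ≤ KM * Real.sqrt δ := by
      have hs0 : 0 ≤ Real.sqrt (t - a) := Real.sqrt_nonneg _
      have hKMle : K * M ≤ KM := by rw [hKM]; linarith
      nlinarith [Real.sqrt_nonneg δ]
    refine h2.trans ?_
    rw [hsqrtδ]
    refine le_of_eq ?_
    field_simp
  calc ‖∫ s in Set.Ioc (0:ℝ) t, A s (f n s)‖
      ≤ ‖∫ s in Set.Ioc (0:ℝ) a, A s (f n s)‖ + ‖∫ s in Set.Ioc a t, A s (f n s)‖ := by
        rw [hsplit]; exact norm_add_le _ _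
    _ < ε/3 + ε/3 := by linarith
    _ ≤ ε := by linarith
end

section
/- Let 𝒪 ⊆ ℝ^m be closed convex with interior point a such that B(a, γ) ⊆ 𝒪. Let X : [0,T] → 𝒪 be absolutely continuous with X'(t) = F(t) − k(t) a.e., where F ∈ L¹(0,T; ℝ^m) and k(t) lies in the normal cone of 𝒪 at X(t) a.e. Then ∫₀^T |k(t)| dt ≤ (1/γ)[ (1/2)|X(0) − a|² + ∫₀^T |X(t) − a| |F(t)| dt ]. -/
open RealInnerProductSpace MeasureTheory

open Set in
/-- Key integral identity: `∫₀ᵀ ⟪H t, h t⟫ dt = (1/2)‖H T‖²` for `H` the primitive of `h`. -/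
lemma primitive_inner_self_aux {E : Type*} [NormedAddCommGroup E] [InnerProductSpace ℝ E]
    [CompleteSpace E] {T : ℝ} {h : ℝ → E}
    (hint : IntegrableOn h (Ioc (0:ℝ) T) volume) :
    ∫ t in Ioc (0:ℝ) T, ⟪(∫ s in Ioc (0:ℝ) t, h s), h t⟫ =
      (1/2) * ‖∫ s in Ioc (0:ℝ) T, h s‖ ^ 2 := by
  set μ : Measure ℝ := volume.restrict (Ioc (0:ℝ) T) with hμ
  have hι : Integrable h μ := hint
  set G : ℝ × ℝ → ℝ := fun p => ⟪h p.1, h p.2⟫ with hG_def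
  have hGm : AEStronglyMeasurable G (μ.prod μ) := AEStronglyMeasurable.inner (𝕜 := ℝ) hι.1.comp_fst hι.1.comp_snd
  have hG : Integrable G (μ.prod μ) := by
    refine (hι.norm.mul_prod hι.norm).mono' hGm ?_
    filter_upwards with p
    simpa using abs_real_inner_le_norm (h p.1) (h p.2)
  set f : ℝ × ℝ → ℝ := indicator {p : ℝ × ℝ | p.1 ≤ p.2} G with hf_def
  set f' : ℝ × ℝ → ℝ := indicator {p : ℝ × ℝ | p.2 ≤ p.1} G with hf'_def
  have hmle : MeasurableSet {p : ℝ × ℝ | p.1 ≤ p.2} :=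
    measurableSet_le measurable_fst measurable_snd
  have hmge : MeasurableSet {p : ℝ × ℝ | p.2 ≤ p.1} :=
    measurableSet_le measurable_snd measurable_fst
  have hf : Integrable f (μ.prod μ) := by
    refine hG.norm.mono' (hGm.indicator hmle) ?_
    filter_upwards with p using norm_indicator_le_norm_self G p
  have hf' : Integrable f' (μ.prod μ) := by
    refine hG.norm.mono' (hGm.indicator hmge) ?_
    filter_upwards with p using norm_indicator_le_norm_self G p
  -- the diagonal is null
  have hdiag : (μ.prod μ) {p : ℝ × ℝ | p.1 = p.2} = 0 := by
    have hms : MeasurableSet {p : ℝ × ℝ | p.1 = p.2} :=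
      measurableSet_eq_fun measurable_fst measurable_snd
    rw [Measure.prod_apply hms]
    have hpre : ∀ x : ℝ, (Prod.mk x ⁻¹' {p : ℝ × ℝ | p.1 = p.2}) = {x} := by
      intro x; ext y; simp [eq_comm]
    simp [hpre, measure_singleton]
  have hae : (fun p => f p + f' p) =ᵐ[μ.prod μ] G := by
    have h0 : ∀ᵐ p ∂(μ.prod μ), ¬ (p.1 = p.2) := by
      rw [ae_iff]; simpa using hdiag
    filter_upwards [h0] with p hp
    rcases le_or_gt p.1 p.2 with h1 | h1
    · have h2 : ¬ p.2 ≤ p.1 := fun h2 => hp (le_antisymm h1 h2)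
      simp [hf_def, hf'_def, indicator_apply, h1, h2]
    · simp [hf_def, hf'_def, indicator_apply, h1.not_ge, h1.le]
  have hsum : (∫ p, f p ∂(μ.prod μ)) + (∫ p, f' p ∂(μ.prod μ)) = ∫ p, G p ∂(μ.prod μ) := by
    rw [← integral_add hf hf', integral_congr_ae hae]
  have htot : ∫ p, G p ∂(μ.prod μ) = ‖∫ s, h s ∂μ‖ ^ 2 := by
    rw [integral_prod _ hG]
    have e1 : ∀ s : ℝ, (∫ t, ⟪h s, h t⟫ ∂μ) = ⟪h s, ∫ t, h t ∂μ⟫ := fun s =>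
      integral_inner hι (h s)
    have e2 : ∀ s : ℝ, ⟪h s, ∫ t, h t ∂μ⟫ = ⟪(∫ t, h t ∂μ), h s⟫ := fun s =>
      real_inner_comm _ _
    calc (∫ s, ∫ t, G (s, t) ∂μ ∂μ) = ∫ s, ⟪(∫ t, h t ∂μ), h s⟫ ∂μ := by
          refine integral_congr_ae (Filter.Eventually.of_forall fun s => ?_)
          exact (e1 s).trans (e2 s)
      _ = ⟪(∫ t, h t ∂μ), ∫ s, h s ∂μ⟫ := integral_inner hι _
      _ = ‖∫ s, h s ∂μ‖ ^ 2 := real_inner_self_eq_norm_sq _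
  have hswap : (∫ p, f' p ∂(μ.prod μ)) = ∫ p, f p ∂(μ.prod μ) := by
    have hfs : f' = fun p : ℝ × ℝ => f p.swap := by
      funext p
      simp only [hf_def, hf'_def, indicator_apply, Prod.fst_swap, Prod.snd_swap,
        Set.mem_setOf_eq, hG_def]
      split_ifs with h1
      · exact real_inner_comm _ _
      · rfl
    rw [hfs, integral_prod_swap f]
  have hfval : (∫ p, f p ∂(μ.prod μ)) =
      ∫ t in Ioc (0:ℝ) T, ⟪(∫ s in Ioc (0:ℝ) t, h s), h t⟫ := by
    rw [integral_prod_symm _ hf]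
    refine integral_congr_ae ?_
    filter_upwards [ae_restrict_mem measurableSet_Ioc] with t ht
    have h1 : (fun s => f (s, t)) = indicator (Iic t) (fun s => ⟪h s, h t⟫) := by
      funext s; simp [hf_def, indicator_apply, Set.mem_Iic, hG_def]
    rw [h1, integral_indicator measurableSet_Iic, hμ,
      Measure.restrict_restrict measurableSet_Iic]
    have h2 : Iic t ∩ Ioc 0 T = Ioc 0 t := by
      ext s
      simp only [Set.mem_inter_iff, Set.mem_Iic, Set.mem_Ioc]
      exact ⟨fun hs => ⟨hs.2.1, hs.1⟩, fun hs => ⟨hs.2, hs.1, hs.2.trans ht.2⟩⟩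
    rw [h2]
    calc (∫ s in Ioc (0:ℝ) t, ⟪h s, h t⟫) = ∫ s in Ioc (0:ℝ) t, ⟪h t, h s⟫ :=
          integral_congr_ae (Filter.Eventually.of_forall fun s => real_inner_comm _ _)
      _ = ⟪h t, ∫ s in Ioc (0:ℝ) t, h s⟫ :=
          integral_inner (hint.mono_set (Ioc_subset_Ioc_right ht.2)) _
      _ = ⟪(∫ s in Ioc (0:ℝ) t, h s), h t⟫ := real_inner_comm _ _
  rw [← hfval]
  rw [hswap, htot] at hsum
  linarith

/-- Total variation bound for the reflection term: if `B(a,γ) ⊆ O` then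
`∫₀ᵀ |k(t)| dt ≤ (1/γ)[(1/2)|X(0)−a|² + ∫₀ᵀ |X(t)−a||F(t)| dt]`. -/
theorem reflection_total_variation_bound
    (m : ℕ) (T γ : ℝ) (hT : 0 < T) (hγ : 0 < γ)
    (O : Set (EuclideanSpace ℝ (Fin m))) (hclosed : IsClosed O) (hconv : Convex ℝ O)
    (a : EuclideanSpace ℝ (Fin m)) (hball : Metric.closedBall a γ ⊆ O)
    (X F k : ℝ → EuclideanSpace ℝ (Fin m))
    (hXO : ∀ t ∈ Set.Icc 0 T, X t ∈ O)
    (hFint : IntervalIntegrable F volume 0 T)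
    (hkint : IntervalIntegrable k volume 0 T)
    (hX : ∀ t ∈ Set.Icc 0 T, X t = X 0 + ∫ s in (0:ℝ)..t, (F s - k s))
    (hk : ∀ᵐ t ∂(volume.restrict (Set.Icc (0:ℝ) T)), ∀ z ∈ O, ⟪k t, X t - z⟫ ≥ 0) :
    (∫ t in (0:ℝ)..T, ‖k t‖) ≤
      (1 / γ) * ((1 / 2) * ‖X 0 - a‖ ^ 2 + ∫ t in (0:ℝ)..T, ‖X t - a‖ * ‖F t‖) := by
  classical
  set h : ℝ → EuclideanSpace ℝ (Fin m) := fun s => F s - k s with hh_def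
  have hhint : IntervalIntegrable h volume 0 T := hFint.sub hkint
  have hhI : IntegrableOn h (Set.Ioc 0 T) volume :=
    (intervalIntegrable_iff_integrableOn_Ioc_of_le hT.le).mp hhint
  have hkI : IntegrableOn k (Set.Ioc 0 T) volume :=
    (intervalIntegrable_iff_integrableOn_Ioc_of_le hT.le).mp hkint
  have hFI : IntegrableOn F (Set.Ioc 0 T) volume :=
    (intervalIntegrable_iff_integrableOn_Ioc_of_le hT.le).mp hFint
  set Z : ℝ → EuclideanSpace ℝ (Fin m) :=
    fun t => (X 0 - a) + ∫ s in Set.Ioc (0:ℝ) t, h s with hZ_def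
  have hhIcc : IntegrableOn h (Set.Icc 0 T) volume :=
    (integrableOn_Icc_iff_integrableOn_Ioc).mpr hhI
  have hZcont : ContinuousOn Z (Set.Icc 0 T) :=
    continuousOn_const.add (intervalIntegral.continuousOn_primitive hhIcc)
  have hZX : ∀ t ∈ Set.Icc 0 T, X t - a = Z t := by
    intro t ht
    rw [hX t ht, intervalIntegral.integral_of_le ht.1]
    simp only [hZ_def]
    abel
  obtain ⟨C, hC⟩ :=
    (isCompact_Icc : IsCompact (Set.Icc (0:ℝ) T)).exists_bound_of_continuousOn hZcont
  set μ' : Measure ℝ := volume.restrict (Set.Ioc (0:ℝ) T) with hμ'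
  have hZm : AEStronglyMeasurable Z μ' :=
    (hZcont.mono Set.Ioc_subset_Icc_self).aestronglyMeasurable measurableSet_Ioc
  have hbd : ∀ᵐ t ∂μ', ‖Z t‖ ≤ C := by
    filter_upwards [ae_restrict_mem measurableSet_Ioc] with t ht
    exact hC t (Set.Ioc_subset_Icc_self ht)
  have mk_int : ∀ {g : ℝ → EuclideanSpace ℝ (Fin m)}, IntegrableOn g (Set.Ioc 0 T) volume →
      Integrable (fun t => ⟪Z t, g t⟫) μ' := by
    intro g hg
    refine (hg.norm.const_mul C).mono' (hZm.inner hg.aestronglyMeasurable) ?_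
    filter_upwards [hbd] with t htb
    calc ‖⟪Z t, g t⟫‖ ≤ ‖Z t‖ * ‖g t‖ := by
          simpa using abs_real_inner_le_norm (Z t) (g t)
      _ ≤ C * ‖g t‖ := mul_le_mul_of_nonneg_right htb (norm_nonneg _)
  have ikk : Integrable (fun t => ⟪Z t, k t⟫) μ' := mk_int hkI
  have iFF : Integrable (fun t => ⟪Z t, F t⟫) μ' := mk_int hFI
  have ihh : Integrable (fun t => ⟪Z t, h t⟫) μ' := mk_int hhI
  -- pointwise lower bound from the normal cone condition
  have hlow : ∀ᵐ t ∂μ', γ * ‖k t‖ ≤ ⟪Z t, k t⟫ := by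
    have hk' : ∀ᵐ t ∂μ', ∀ z ∈ O, ⟪k t, X t - z⟫ ≥ 0 :=
      ae_restrict_of_ae_restrict_of_subset Set.Ioc_subset_Icc_self hk
    filter_upwards [hk', ae_restrict_mem measurableSet_Ioc] with t hkt ht
    by_cases hk0 : k t = 0
    · simp [hk0]
    · have hknorm : (0:ℝ) < ‖k t‖ := norm_pos_iff.mpr hk0
      set z : EuclideanSpace ℝ (Fin m) := a + (γ / ‖k t‖) • k t with hz
      have hzO : z ∈ O := by
        apply hball
        have : dist z a = γ := by
          rw [dist_eq_norm, hz]
          have : a + (γ / ‖k t‖) • k t - a = (γ / ‖k t‖) • k t := by abel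
          rw [this, norm_smul]
          rw [Real.norm_eq_abs, abs_div, abs_of_pos hγ, abs_of_pos hknorm]
          field_simp
        rw [Metric.mem_closedBall, this]
      have h0 := hkt z hzO
      have hXa : X t - a = Z t := hZX t (Set.Ioc_subset_Icc_self ht)
      have hXz : X t - z = Z t - (γ / ‖k t‖) • k t := by
        rw [hz, ← hXa]; abel
      rw [hXz, inner_sub_right, real_inner_smul_right,
        real_inner_self_eq_norm_mul_norm] at h0
      have hgn : (γ / ‖k t‖) * (‖k t‖ * ‖k t‖) = γ * ‖k t‖ := by
        field_simp
      rw [hgn] at h0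
      rw [real_inner_comm]
      linarith
  have hIk : Integrable (fun t => γ * ‖k t‖) μ' := hkI.norm.const_mul γ
  have step1 : γ * (∫ t in Set.Ioc (0:ℝ) T, ‖k t‖) ≤ ∫ t in Set.Ioc (0:ℝ) T, ⟪Z t, k t⟫ := by
    rw [← integral_const_mul]
    exact integral_mono_ae hIk ikk hlow
  -- the key identity
  have hkey := primitive_inner_self_aux (T := T) hhI
  set I : EuclideanSpace ℝ (Fin m) := ∫ s in Set.Ioc (0:ℝ) T, h s with hI
  have hH : Integrable (fun t => ⟪(∫ s in Set.Ioc (0:ℝ) t, h s), h t⟫) μ' := by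
    have heq : (fun t => ⟪(∫ s in Set.Ioc (0:ℝ) t, h s), h t⟫) =
        fun t => ⟪Z t, h t⟫ - ⟪X 0 - a, h t⟫ := by
      funext t
      simp only [hZ_def, inner_add_left]
      ring
    rw [heq]
    exact ihh.sub (hhI.const_inner _)
  have hZh : (∫ t in Set.Ioc (0:ℝ) T, ⟪Z t, h t⟫) = ⟪X 0 - a, I⟫ + (1/2) * ‖I‖ ^ 2 := by
    calc (∫ t in Set.Ioc (0:ℝ) T, ⟪Z t, h t⟫)
        = ∫ t in Set.Ioc (0:ℝ) T,
            (⟪X 0 - a, h t⟫ + ⟪(∫ s in Set.Ioc (0:ℝ) t, h s), h t⟫) := by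
          refine integral_congr_ae (Filter.Eventually.of_forall fun t => ?_)
          simp only [hZ_def, inner_add_left]
      _ = (∫ t in Set.Ioc (0:ℝ) T, ⟪X 0 - a, h t⟫) +
            ∫ t in Set.Ioc (0:ℝ) T, ⟪(∫ s in Set.Ioc (0:ℝ) t, h s), h t⟫ :=
          integral_add (hhI.const_inner _) hH
      _ = ⟪X 0 - a, I⟫ + (1/2) * ‖I‖ ^ 2 := by rw [integral_inner hhI, hkey]
  have hZh_lb : -((1/2) * ‖X 0 - a‖ ^ 2) ≤ ∫ t in Set.Ioc (0:ℝ) T, ⟪Z t, h t⟫ := by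
    rw [hZh]
    have hns := norm_add_sq_real (X 0 - a) I
    nlinarith [sq_nonneg ‖X 0 - a + I‖]
  have split : (∫ t in Set.Ioc (0:ℝ) T, ⟪Z t, k t⟫) =
      (∫ t in Set.Ioc (0:ℝ) T, ⟪Z t, F t⟫) - ∫ t in Set.Ioc (0:ℝ) T, ⟪Z t, h t⟫ := by
    rw [← integral_sub iFF ihh]
    refine integral_congr_ae (Filter.Eventually.of_forall fun t => ?_)
    simp [hh_def, inner_sub_right]
  have iZF : Integrable (fun t => ‖Z t‖ * ‖F t‖) μ' := by
    refine (hFI.norm.const_mul C).mono' (hZm.norm.mul hFI.aestronglyMeasurable.norm) ?_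
    filter_upwards [hbd] with t htb
    simp only [norm_mul, norm_norm]
    exact mul_le_mul_of_nonneg_right htb (norm_nonneg _)
  have hZF : (∫ t in Set.Ioc (0:ℝ) T, ⟪Z t, F t⟫) ≤
      ∫ t in Set.Ioc (0:ℝ) T, ‖Z t‖ * ‖F t‖ :=
    integral_mono_ae iFF iZF (Filter.Eventually.of_forall fun t => real_inner_le_norm _ _)
  have tgt1 : (∫ t in (0:ℝ)..T, ‖k t‖) = ∫ t in Set.Ioc (0:ℝ) T, ‖k t‖ :=
    intervalIntegral.integral_of_le hT.le
  have tgt2 : (∫ t in (0:ℝ)..T, ‖X t - a‖ * ‖F t‖) =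
      ∫ t in Set.Ioc (0:ℝ) T, ‖Z t‖ * ‖F t‖ := by
    rw [intervalIntegral.integral_of_le hT.le]
    refine setIntegral_congr_fun measurableSet_Ioc fun t ht => ?_
    rw [hZX t (Set.Ioc_subset_Icc_self ht)]
  have main : γ * (∫ t in Set.Ioc (0:ℝ) T, ‖k t‖) ≤
      (1/2) * ‖X 0 - a‖ ^ 2 + ∫ t in Set.Ioc (0:ℝ) T, ‖Z t‖ * ‖F t‖ := by
    have := step1
    rw [split] at this
    linarith
  rw [tgt1, tgt2]
  calc (∫ t in Set.Ioc (0:ℝ) T, ‖k t‖)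
      = (1/γ) * (γ * ∫ t in Set.Ioc (0:ℝ) T, ‖k t‖) := by field_simp
    _ ≤ (1/γ) * ((1/2) * ‖X 0 - a‖ ^ 2 + ∫ t in Set.Ioc (0:ℝ) T, ‖Z t‖ * ‖F t‖) :=
        mul_le_mul_of_nonneg_left main (by positivity)
end

section
/- Let b : ℝ^m → ℝ^m be continuous with ⟨x − y, b(x) − b(y)⟩ ≤ C_b|x − y|², let σ : ℝ^m → L(ℝ^d, ℝ^m) be Lipschitz with constant C_σ, and let 𝒪 ⊆ ℝ^m be closed convex. Suppose for h with ḣ ∈ L²(0,T;ℝ^d), X^h, Y^h : [0,T] → 𝒪 are absolutely continuous solutions of x'(t) = b(x(t)) + σ(x(t))ḣ(t) − k(t) with k(t) in the normal cone of 𝒪 at x(t) a.e., and X^h(0) = Y^h(0). Then X^h = Y^h on [0,T]. -/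
open RealInnerProductSpace MeasureTheory
open Set Filter Topology


lemma sq_norm_primitive {E : Type*} [NormedAddCommGroup E] [InnerProductSpace ℝ E]
    [CompleteSpace E] {t : ℝ} {f : ℝ → E} (hf : IntegrableOn f (Set.Ioc 0 t)) :
    ‖∫ s in Set.Ioc (0:ℝ) t, f s‖ ^ 2
      = 2 * ∫ s in Set.Ioc (0:ℝ) t, ⟪f s, ∫ u in Set.Ioc (0:ℝ) s, f u⟫ := by
  set μ := volume.restrict (Set.Ioc (0:ℝ) t) with hμ
  set I := ∫ s in Set.Ioc (0:ℝ) t, f s with hI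
  have hfμ : Integrable f μ := hf
  set K : ℝ × ℝ → ℝ := fun p => ⟪f p.1, f p.2⟫ with hK
  have hKm : AEStronglyMeasurable K (μ.prod μ) :=
    (hfμ.aestronglyMeasurable.comp_fst.inner hfμ.aestronglyMeasurable.comp_snd)
  have hKint : Integrable K (μ.prod μ) := by
    refine Integrable.mono' (g := fun p => ‖f p.1‖ * ‖f p.2‖) ?_ hKm ?_
    · exact hfμ.norm.mul_prod hfμ.norm
    · filter_upwards with p
      exact abs_real_inner_le_norm _ _
  set Kle : ℝ × ℝ → ℝ := Set.indicator {p : ℝ × ℝ | p.2 ≤ p.1} K with hKle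
  set Kgt : ℝ × ℝ → ℝ := Set.indicator {p : ℝ × ℝ | p.1 < p.2} K with hKgt
  have hle : MeasurableSet {p : ℝ × ℝ | p.2 ≤ p.1} := measurableSet_le measurable_snd measurable_fst
  have hgt : MeasurableSet {p : ℝ × ℝ | p.1 < p.2} := measurableSet_lt measurable_fst measurable_snd
  have hKleint : Integrable Kle (μ.prod μ) := hKint.indicator hle
  have hKgtint : Integrable Kgt (μ.prod μ) := hKint.indicator hgt
  have hsplit : ∀ p, K p = Kle p + Kgt p := by
    intro p
    by_cases h : p.2 ≤ p.1
    · simp [hKle, hKgt, Set.indicator_of_mem, Set.indicator_of_notMem, h, not_lt.2 h]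
    · simp [hKle, hKgt, Set.indicator_of_mem, Set.indicator_of_notMem, h, lt_of_not_ge h]
  -- the target integral
  set J := ∫ s in Set.Ioc (0:ℝ) t, ⟪f s, ∫ u in Set.Ioc (0:ℝ) s, f u⟫ with hJ
  -- restriction identities
  have hres : ∀ s ∈ Set.Ioc (0:ℝ) t, μ.restrict (Set.Iic s) = volume.restrict (Set.Ioc 0 s) := by
    intro s hs
    rw [hμ, Measure.restrict_restrict measurableSet_Iic]
    congr 1
    ext x
    simp only [Set.mem_inter_iff, Set.mem_Iic, Set.mem_Ioc]
    constructor
    · rintro ⟨h1, h2, h3⟩; exact ⟨h2, h1⟩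
    · rintro ⟨h1, h2⟩; exact ⟨h2, h1, h2.trans hs.2⟩
  have hres' : ∀ s ∈ Set.Ioc (0:ℝ) t, μ.restrict (Set.Iio s) = volume.restrict (Set.Ioo 0 s) := by
    intro s hs
    rw [hμ, Measure.restrict_restrict measurableSet_Iio]
    congr 1
    ext x
    simp only [Set.mem_inter_iff, Set.mem_Iio, Set.mem_Ioc, Set.mem_Ioo]
    constructor
    · rintro ⟨h1, h2, h3⟩; exact ⟨h2, h1⟩
    · rintro ⟨h1, h2⟩; exact ⟨h2, h1, h2.le.trans hs.2⟩
  -- claim 1 : ∫ Kle = J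
  have claim1 : ∫ p, Kle p ∂(μ.prod μ) = J := by
    have hu : Integrable (Function.uncurry fun x y => Kle (x, y)) (μ.prod μ) := hKleint
    have e1 : (∫ p, Kle p ∂(μ.prod μ)) = ∫ x, ∫ y, Kle (x, y) ∂μ ∂μ :=
      (MeasureTheory.integral_integral hu).symm
    rw [e1, hJ]
    refine setIntegral_congr_fun measurableSet_Ioc (fun s hs => ?_)
    have : (fun u => Kle (s, u)) = Set.indicator (Set.Iic s) (fun u => ⟪f s, f u⟫) := by
      funext u
      by_cases h : u ≤ s
      · simp [hKle, Set.indicator_of_mem, h, hK]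
      · simp [hKle, Set.indicator_of_notMem, h]
    rw [this, integral_indicator measurableSet_Iic, hres s hs,
      integral_inner (hf.mono_set (Set.Ioc_subset_Ioc_right hs.2))]
  -- claim 2 : ∫ Kgt = J
  have claim2 : ∫ p, Kgt p ∂(μ.prod μ) = J := by
    have hu : Integrable (Function.uncurry fun x y => Kgt (x, y)) (μ.prod μ) := hKgtint
    have e1 : (∫ p, Kgt p ∂(μ.prod μ)) = ∫ x, ∫ y, Kgt (x, y) ∂μ ∂μ :=
      (MeasureTheory.integral_integral hu).symm
    have swap : ∫ x, ∫ y, Kgt (x, y) ∂μ ∂μ = ∫ y, ∫ x, Kgt (x, y) ∂μ ∂μ :=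
      MeasureTheory.integral_integral_swap hu
    rw [e1, swap, hJ]
    refine setIntegral_congr_fun measurableSet_Ioc (fun s hs => ?_)
    have : (fun u => Kgt (u, s)) = Set.indicator (Set.Iio s) (fun u => ⟪f u, f s⟫) := by
      funext u
      by_cases h : u < s
      · simp [hKgt, Set.indicator_of_mem, h, hK]
      · simp [hKgt, Set.indicator_of_notMem, h]
    rw [this, integral_indicator measurableSet_Iio, hres' s hs,
      ← MeasureTheory.integral_Ioc_eq_integral_Ioo]
    have : ∫ u in Set.Ioc (0:ℝ) s, ⟪f u, f s⟫ = ⟪f s, ∫ u in Set.Ioc (0:ℝ) s, f u⟫ := by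
      rw [← integral_inner (hf.mono_set (Set.Ioc_subset_Ioc_right hs.2))]
      exact setIntegral_congr_fun measurableSet_Ioc (fun u _ => real_inner_comm _ _)
    rw [this]
  -- assemble
  have h1 : ‖I‖ ^ 2 = ∫ s, ⟪I, f s⟫ ∂μ := by
    rw [integral_inner hfμ, real_inner_self_eq_norm_sq]
  have h2 : ∀ s, ⟪I, f s⟫ = ∫ u, ⟪f s, f u⟫ ∂μ := by
    intro s
    rw [integral_inner hfμ, real_inner_comm]
  have h3 : ‖I‖ ^ 2 = ∫ p, K p ∂(μ.prod μ) := by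
    have hu : Integrable (Function.uncurry fun x y => K (x, y)) (μ.prod μ) := hKint
    have e1 : (∫ p, K p ∂(μ.prod μ)) = ∫ x, ∫ y, K (x, y) ∂μ ∂μ :=
      (MeasureTheory.integral_integral hu).symm
    rw [h1, e1]
    exact integral_congr_ae (Filter.Eventually.of_forall (fun s => h2 s))
  have h4 : ∫ p, K p ∂(μ.prod μ) = J + J := by
    calc ∫ p, K p ∂(μ.prod μ) = ∫ p, (Kle p + Kgt p) ∂(μ.prod μ) := by
          exact integral_congr_ae (Filter.Eventually.of_forall hsplit)
      _ = ∫ p, Kle p ∂(μ.prod μ) + ∫ p, Kgt p ∂(μ.prod μ) := integral_add hKleint hKgtint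
      _ = J + J := by rw [claim1, claim2]
  rw [h3, h4]; ring


lemma gronwall_zero {T : ℝ} {φ g : ℝ → ℝ}
    (hφ0 : ∀ s, 0 ≤ φ s) (hg0 : ∀ s, 0 ≤ g s)
    (hgφint : IntegrableOn (fun s => g s * φ s) (Set.Icc 0 T))
    (hgint : IntegrableOn g (Set.Icc 0 T))
    (hkey : ∀ t ∈ Set.Icc (0:ℝ) T, φ t ≤ ∫ s in Set.Ioc (0:ℝ) t, g s * φ s) :
    ∀ t ∈ Set.Icc (0:ℝ) T, φ t ≤ 0 := by
  set ψ : ℝ → ℝ := fun t => ∫ s in Set.Ioc (0:ℝ) t, g s * φ s with hψdef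
  have hψcont : ContinuousOn ψ (Set.Icc 0 T) := intervalIntegral.continuousOn_primitive hgφint
  have hGcont : ContinuousOn (fun t => ∫ s in Set.Ioc (0:ℝ) t, g s) (Set.Icc 0 T) :=
    intervalIntegral.continuousOn_primitive hgint
  -- splitting of ψ
  have hsplit : ∀ a c : ℝ, 0 ≤ a → a ≤ c → c ≤ T →
      ψ c = ψ a + ∫ s in Set.Ioc a c, g s * φ s := by
    intro a c ha hac hcT
    have h1 : Set.Ioc (0:ℝ) c = Set.Ioc 0 a ∪ Set.Ioc a c := (Set.Ioc_union_Ioc_eq_Ioc ha hac).symm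
    have hi1 : IntegrableOn (fun s => g s * φ s) (Set.Ioc 0 a) :=
      hgφint.mono_set (fun x hx => ⟨hx.1.le, hx.2.trans (hac.trans hcT)⟩)
    have hi2 : IntegrableOn (fun s => g s * φ s) (Set.Ioc a c) :=
      hgφint.mono_set (fun x hx => ⟨ha.trans hx.1.le, hx.2.trans hcT⟩)
    rw [hψdef]
    simp only
    rw [h1, setIntegral_union (Set.Ioc_disjoint_Ioc_of_le le_rfl) measurableSet_Ioc hi1 hi2]
  have hGsplit : ∀ a c : ℝ, 0 ≤ a → a ≤ c → c ≤ T →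
      (∫ s in Set.Ioc (0:ℝ) c, g s) = (∫ s in Set.Ioc (0:ℝ) a, g s) + ∫ s in Set.Ioc a c, g s := by
    intro a c ha hac hcT
    have h1 : Set.Ioc (0:ℝ) c = Set.Ioc 0 a ∪ Set.Ioc a c := (Set.Ioc_union_Ioc_eq_Ioc ha hac).symm
    have hi1 : IntegrableOn g (Set.Ioc 0 a) :=
      hgint.mono_set (fun x hx => ⟨hx.1.le, hx.2.trans (hac.trans hcT)⟩)
    have hi2 : IntegrableOn g (Set.Ioc a c) :=
      hgint.mono_set (fun x hx => ⟨ha.trans hx.1.le, hx.2.trans hcT⟩)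
    rw [h1, setIntegral_union (Set.Ioc_disjoint_Ioc_of_le le_rfl) measurableSet_Ioc hi1 hi2]
  have hψnonneg : ∀ c : ℝ, 0 ≤ ψ c := fun c =>
    setIntegral_nonneg measurableSet_Ioc (fun s _ => mul_nonneg (hg0 s) (hφ0 s))
  have hψmono : ∀ a c : ℝ, 0 ≤ a → a ≤ c → c ≤ T → ψ a ≤ ψ c := by
    intro a c ha hac hcT
    rw [hsplit a c ha hac hcT]
    have : 0 ≤ ∫ s in Set.Ioc a c, g s * φ s :=
      setIntegral_nonneg measurableSet_Ioc (fun s _ => mul_nonneg (hg0 s) (hφ0 s))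
    linarith
  -- the set where ψ ≤ 0
  set S : Set ℝ := {t | ψ t ≤ 0} with hS
  have hmain : Set.Icc (0:ℝ) T ⊆ S := by
    refine IsClosed.Icc_subset_of_forall_exists_gt ?_ ?_ ?_
    · have := hψcont.preimage_isClosed_of_isClosed isClosed_Icc (isClosed_Iic (a := (0:ℝ)))
      convert this using 1
      ext x; simp [hS, Set.mem_Icc, and_comm]
    · show ψ 0 ≤ 0
      simp [hψdef]
    · rintro x ⟨hxS, hx0, hxT⟩ y hy
      -- choose u ∈ Ioc x (min y T) with small g-integral
      set mny := min y T with hmny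
      have hxmny : x < mny := lt_min hy hxT
      have hsub : Set.Ioc x mny ⊆ Set.Icc 0 T :=
        fun z hz => ⟨hx0.trans hz.1.le, hz.2.trans (min_le_right _ _)⟩
      have hFne : (𝓝[Set.Ioc x mny] x).NeBot := left_nhdsWithin_Ioc_neBot hxmny
      have hxIcc : x ∈ Set.Icc (0:ℝ) T := ⟨hx0, hxT.le⟩
      have htend : Tendsto (fun t => ∫ s in Set.Ioc (0:ℝ) t, g s) (𝓝[Set.Ioc x mny] x)
          (𝓝 (∫ s in Set.Ioc (0:ℝ) x, g s)) :=
        ((hGcont x hxIcc).mono hsub).tendsto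
      have hev : ∀ᶠ u in 𝓝[Set.Ioc x mny] x,
          (∫ s in Set.Ioc (0:ℝ) u, g s) < (∫ s in Set.Ioc (0:ℝ) x, g s) + 1/2 :=
        htend.eventually_lt_const (by linarith)
      obtain ⟨u, hu1, hu2⟩ := (hev.and eventually_mem_nhdsWithin).exists
      -- hu1 : G u < G x + 1/2, hu2 : u ∈ Ioc x mny
      have hu0 : 0 ≤ u := hx0.trans hu2.1.le
      have huT : u ≤ T := hu2.2.trans (min_le_right _ _)
      have hgsmall : (∫ s in Set.Ioc x u, g s) ≤ 1/2 := by
        have := hGsplit x u hx0 hu2.1.le huT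
        linarith
      -- key estimate : ψ u ≤ 0
      have hψu : ψ u ≤ 0 := by
        have hstep : (∫ s in Set.Ioc x u, g s * φ s) ≤ (∫ s in Set.Ioc x u, g s) * ψ u := by
          rw [← integral_mul_const]
          refine setIntegral_mono_on ?_ ?_ measurableSet_Ioc ?_
          · exact hgφint.mono_set (fun z hz => ⟨hx0.trans hz.1.le, hz.2.trans huT⟩)
          · exact (hgint.mono_set (fun z hz => ⟨hx0.trans hz.1.le, hz.2.trans huT⟩)).mul_const _
          · intro s hs
            have hsIcc : s ∈ Set.Icc (0:ℝ) T := ⟨hx0.trans hs.1.le, hs.2.trans huT⟩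
            have h1 : φ s ≤ ψ s := hkey s hsIcc
            have h2 : ψ s ≤ ψ u := hψmono s u hsIcc.1 hs.2 huT
            exact mul_le_mul_of_nonneg_left (h1.trans h2) (hg0 s)
        have hψx : ψ x ≤ 0 := hxS
        have hsp := hsplit x u hx0 hu2.1.le huT
        have hψunn := hψnonneg u
        nlinarith [hgsmall, hψunn]
      exact ⟨u, hψu, hu2.1, hu2.2.trans (min_le_left _ _)⟩
  intro t ht
  exact (hkey t ht).trans (hmain ht)



/-- Uniqueness of solutions of the skeleton equation
`x' = b(x) + σ(x)ḣ − k`, `k(t)` in the normal cone of `O` at `x(t)`. -/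
theorem skeleton_equation_uniqueness
    (m d : ℕ) (T Cb Cσ : ℝ) (hT : 0 < T)
    (b : EuclideanSpace ℝ (Fin m) → EuclideanSpace ℝ (Fin m)) (hbc : Continuous b)
    (hb : ∀ x y, ⟪x - y, b x - b y⟫ ≤ Cb * ‖x - y‖ ^ 2)
    (σ : EuclideanSpace ℝ (Fin m) → (EuclideanSpace ℝ (Fin d) →L[ℝ] EuclideanSpace ℝ (Fin m)))
    (hσ : LipschitzWith (Real.toNNReal Cσ) σ)
    (O : Set (EuclideanSpace ℝ (Fin m))) (hclosed : IsClosed O) (hconv : Convex ℝ O)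
    (hdot : ℝ → EuclideanSpace ℝ (Fin d))
    (hdotL2 : MemLp hdot 2 (volume.restrict (Set.Icc (0:ℝ) T)))
    (X Y kX kY : ℝ → EuclideanSpace ℝ (Fin m))
    (hXO : ∀ t ∈ Set.Icc 0 T, X t ∈ O) (hYO : ∀ t ∈ Set.Icc 0 T, Y t ∈ O)
    (hXint : IntervalIntegrable (fun s => b (X s) + σ (X s) (hdot s) - kX s) volume 0 T)
    (hYint : IntervalIntegrable (fun s => b (Y s) + σ (Y s) (hdot s) - kY s) volume 0 T)
    (hX : ∀ t ∈ Set.Icc 0 T, X t = X 0 + ∫ s in (0:ℝ)..t, (b (X s) + σ (X s) (hdot s) - kX s))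
    (hY : ∀ t ∈ Set.Icc 0 T, Y t = Y 0 + ∫ s in (0:ℝ)..t, (b (Y s) + σ (Y s) (hdot s) - kY s))
    (hkX : ∀ᵐ t ∂(volume.restrict (Set.Icc (0:ℝ) T)), ∀ z ∈ O, ⟪kX t, X t - z⟫ ≥ 0)
    (hkY : ∀ᵐ t ∂(volume.restrict (Set.Icc (0:ℝ) T)), ∀ z ∈ O, ⟪kY t, Y t - z⟫ ≥ 0)
    (h0 : X 0 = Y 0) :
    ∀ t ∈ Set.Icc 0 T, X t = Y t := by
  haveI : IsFiniteMeasure (volume.restrict (Set.Icc (0:ℝ) T)) :=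
    ⟨by rw [Measure.restrict_apply_univ]; exact isCompact_Icc.measure_lt_top⟩
  set FX : ℝ → EuclideanSpace ℝ (Fin m) := fun s => b (X s) + σ (X s) (hdot s) - kX s with hFX
  set FY : ℝ → EuclideanSpace ℝ (Fin m) := fun s => b (Y s) + σ (Y s) (hdot s) - kY s with hFY
  set f : ℝ → EuclideanSpace ℝ (Fin m) := fun s => FX s - FY s with hf
  have hfIoc : IntegrableOn f (Set.Ioc 0 T) := (hXint.sub hYint).1
  have hfIcc : IntegrableOn f (Set.Icc 0 T) := by
    rwa [integrableOn_Icc_iff_integrableOn_Ioc]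
  set W : ℝ → EuclideanSpace ℝ (Fin m) := fun t => ∫ s in Set.Ioc (0:ℝ) t, f s with hW
  have hWcont : ContinuousOn W (Set.Icc 0 T) := intervalIntegral.continuousOn_primitive hfIcc
  have hWeq : ∀ t ∈ Set.Icc (0:ℝ) T, W t = X t - Y t := by
    intro t ht
    have hXt : IntervalIntegrable FX volume 0 t :=
      hXint.mono_set (Set.uIcc_subset_uIcc Set.left_mem_uIcc
        (by rw [Set.uIcc_of_le hT.le]; exact ht))
    have hYt : IntervalIntegrable FY volume 0 t :=
      hYint.mono_set (Set.uIcc_subset_uIcc Set.left_mem_uIcc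
        (by rw [Set.uIcc_of_le hT.le]; exact ht))
    have : X t - Y t = ∫ s in (0:ℝ)..t, f s := by
      rw [hX t ht, hY t ht, h0, intervalIntegral.integral_sub hXt hYt]
      abel
    rw [this, hW, intervalIntegral.integral_of_le ht.1]
  set φ : ℝ → ℝ := fun t => ‖W t‖ ^ 2 with hφ
  have hφ0 : ∀ s, 0 ≤ φ s := fun s => sq_nonneg _
  set Cb' : ℝ := max Cb 0 with hCb'
  set Cσ' : ℝ := max Cσ 0 with hCσ'
  set g : ℝ → ℝ := fun s => 2 * Cb' + 2 * Cσ' * ‖hdot s‖ with hg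
  have hg0 : ∀ s, 0 ≤ g s := by
    intro s
    have h1 : (0:ℝ) ≤ Cb' := le_max_right _ _
    have h2 : (0:ℝ) ≤ Cσ' := le_max_right _ _
    have := norm_nonneg (hdot s)
    positivity
  -- integrability of g
  have hdot1 : MemLp hdot 1 (volume.restrict (Set.Icc (0:ℝ) T)) :=
    hdotL2.mono_exponent (by norm_num)
  have hdotint : Integrable hdot (volume.restrict (Set.Icc (0:ℝ) T)) :=
    memLp_one_iff_integrable.mp hdot1
  have hgIcc : IntegrableOn g (Set.Icc 0 T) := by
    refine (integrable_const _).add ?_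
    exact (hdotint.norm.const_mul _)
  -- bound on W
  obtain ⟨C, hC⟩ := isCompact_Icc.exists_bound_of_continuousOn hWcont
  have hC0 : 0 ≤ C := le_trans (norm_nonneg _) (hC 0 ⟨le_refl 0, hT.le⟩)
  -- integrability of the inner product integrand
  have hWaesm : AEStronglyMeasurable W (volume.restrict (Set.Icc (0:ℝ) T)) :=
    hWcont.aestronglyMeasurable measurableSet_Icc
  have hinner_int : IntegrableOn (fun s => ⟪f s, W s⟫) (Set.Icc 0 T) := by
    refine Integrable.mono' (g := fun s => ‖f s‖ * C) (hfIcc.norm.mul_const _)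
      (hfIcc.aestronglyMeasurable.inner hWaesm) ?_
    filter_upwards [ae_restrict_mem measurableSet_Icc] with s hs
    calc ‖⟪f s, W s⟫‖ ≤ ‖f s‖ * ‖W s‖ := norm_inner_le_norm _ _
      _ ≤ ‖f s‖ * C := mul_le_mul_of_nonneg_left (hC s hs) (norm_nonneg _)
  have hgφ_int : IntegrableOn (fun s => g s * φ s) (Set.Icc 0 T) := by
    refine Integrable.mono' (g := fun s => g s * C ^ 2) (hgIcc.mul_const _)
      ((aestronglyMeasurable_const.add
        (aestronglyMeasurable_const.mul hdotint.norm.aestronglyMeasurable)).mul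
        ((hWaesm.norm.pow 2))) ?_
    filter_upwards [ae_restrict_mem measurableSet_Icc] with s hs
    have h1 : φ s ≤ C ^ 2 := by
      have h2 := hC s hs
      show ‖W s‖ ^ 2 ≤ C ^ 2
      nlinarith [norm_nonneg (W s)]
    rw [Real.norm_eq_abs, abs_of_nonneg (mul_nonneg (hg0 s) (hφ0 s))]
    exact mul_le_mul_of_nonneg_left h1 (hg0 s)
  -- pointwise a.e. bound
  have hptwise : ∀ᵐ s ∂(volume.restrict (Set.Icc (0:ℝ) T)),
      2 * ⟪f s, W s⟫ ≤ g s * φ s := by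
    filter_upwards [hkX, hkY, ae_restrict_mem measurableSet_Icc] with s h1 h2 hs
    have hZ : W s = X s - Y s := hWeq s hs
    set Z : EuclideanSpace ℝ (Fin m) := X s - Y s with hZdef
    have hfs : f s = (b (X s) - b (Y s)) + ((σ (X s) - σ (Y s)) (hdot s)) - (kX s - kY s) := by
      show FX s - FY s = _
      rw [hFX, hFY]
      simp only [ContinuousLinearMap.sub_apply]
      abel
    have hinner : ⟪f s, W s⟫
        = ⟪Z, b (X s) - b (Y s)⟫ + ⟪Z, (σ (X s) - σ (Y s)) (hdot s)⟫ - ⟪Z, kX s - kY s⟫ := by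
      rw [hZ, real_inner_comm, hfs, inner_sub_right, inner_add_right]
    have t1 : ⟪Z, b (X s) - b (Y s)⟫ ≤ Cb' * ‖Z‖ ^ 2 :=
      (hb (X s) (Y s)).trans (mul_le_mul_of_nonneg_right (le_max_left _ _) (sq_nonneg _))
    have t2 : ⟪Z, (σ (X s) - σ (Y s)) (hdot s)⟫ ≤ Cσ' * ‖hdot s‖ * ‖Z‖ ^ 2 := by
      have e1 : ⟪Z, (σ (X s) - σ (Y s)) (hdot s)⟫ ≤ ‖Z‖ * ‖(σ (X s) - σ (Y s)) (hdot s)‖ :=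
        real_inner_le_norm _ _
      have e2 : ‖(σ (X s) - σ (Y s)) (hdot s)‖ ≤ ‖σ (X s) - σ (Y s)‖ * ‖hdot s‖ :=
        ContinuousLinearMap.le_opNorm _ _
      have e3 : ‖σ (X s) - σ (Y s)‖ ≤ Cσ' * ‖Z‖ := by
        have := hσ.dist_le_mul (X s) (Y s)
        rw [dist_eq_norm, dist_eq_norm] at this
        rwa [hCσ', ← Real.coe_toNNReal' Cσ]
      have hZn := norm_nonneg Z
      have hh := norm_nonneg (hdot s)
      calc ⟪Z, (σ (X s) - σ (Y s)) (hdot s)⟫ ≤ ‖Z‖ * ‖(σ (X s) - σ (Y s)) (hdot s)‖ := e1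
        _ ≤ ‖Z‖ * (‖σ (X s) - σ (Y s)‖ * ‖hdot s‖) := mul_le_mul_of_nonneg_left e2 hZn
        _ ≤ ‖Z‖ * ((Cσ' * ‖Z‖) * ‖hdot s‖) :=
            mul_le_mul_of_nonneg_left (mul_le_mul_of_nonneg_right e3 hh) hZn
        _ = Cσ' * ‖hdot s‖ * ‖Z‖ ^ 2 := by ring
    have t3 : 0 ≤ ⟪Z, kX s - kY s⟫ := by
      have a1 : (0:ℝ) ≤ ⟪kX s, X s - Y s⟫ := h1 (Y s) (hYO s hs)
      have a2 : (0:ℝ) ≤ ⟪kY s, Y s - X s⟫ := h2 (X s) (hXO s hs)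
      have a3 : ⟪kY s, Y s - X s⟫ = - ⟪kY s, X s - Y s⟫ := by
        rw [← inner_neg_right]; congr 1; abel
      have b1 : ⟪Z, kX s⟫ = ⟪kX s, X s - Y s⟫ := by rw [hZdef]; exact real_inner_comm _ _
      have b2 : ⟪Z, kY s⟫ = ⟪kY s, X s - Y s⟫ := by rw [hZdef]; exact real_inner_comm _ _
      rw [inner_sub_right, b1, b2]
      rw [a3] at a2
      linarith
    have hφs : φ s = ‖Z‖ ^ 2 := by rw [hφ]; simp only; rw [hZ]
    rw [hinner, hφs, hg]
    show 2 * (_ + _ - _) ≤ (2 * Cb' + 2 * Cσ' * ‖hdot s‖) * ‖Z‖ ^ 2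
    have expand : (2 * Cb' + 2 * Cσ' * ‖hdot s‖) * ‖Z‖ ^ 2
        = 2 * (Cb' * ‖Z‖ ^ 2) + 2 * (Cσ' * ‖hdot s‖ * ‖Z‖ ^ 2) := by ring
    rw [expand]
    linarith [t1, t2, t3]
  -- Gronwall integral inequality
  have hkey : ∀ t ∈ Set.Icc (0:ℝ) T, φ t ≤ ∫ s in Set.Ioc (0:ℝ) t, g s * φ s := by
    intro t ht
    have hid : φ t = 2 * ∫ s in Set.Ioc (0:ℝ) t, ⟪f s, W s⟫ :=
      sq_norm_primitive (hfIoc.mono_set (Set.Ioc_subset_Ioc_right ht.2))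
    have hsub : Set.Ioc (0:ℝ) t ⊆ Set.Icc 0 T :=
      fun z hz => ⟨hz.1.le, hz.2.trans ht.2⟩
    have hmono : (∫ s in Set.Ioc (0:ℝ) t, 2 * ⟪f s, W s⟫) ≤ ∫ s in Set.Ioc (0:ℝ) t, g s * φ s := by
      refine integral_mono_ae ((hinner_int.mono_set hsub).const_mul 2)
        (hgφ_int.mono_set hsub) ?_
      exact ae_restrict_of_ae_restrict_of_subset hsub hptwise
    rw [hid, ← integral_const_mul]
    exact hmono
  -- conclude via Gronwall
  have hzero := gronwall_zero hφ0 hg0 hgφ_int hgIcc hkey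
  intro t ht
  have : φ t = 0 := le_antisymm (hzero t ht) (hφ0 t)
  have hWt : W t = 0 := by
    have : ‖W t‖ = 0 := by
      have := this
      rw [hφ] at this
      simp only at this
      nlinarith [norm_nonneg (W t)]
    exact norm_eq_zero.mp this
  have := hWeq t ht
  rw [hWt] at this
  exact (sub_eq_zero.mp this.symm)
end

section
/- Let b, σ, 𝒪 be as follows: ⟨x−y, b(x)−b(y)⟩ ≤ C_b|x−y|², ‖σ(x)−σ(y)‖ ≤ C_σ|x−y|, 𝒪 closed convex. For ḣ ∈ L²(0,T;ℝ^d) with ‖ḣ‖_{L²} ≤ N, let X^h(·,x) denote a solution in 𝒪 of x' = b(x) + σ(x)ḣ − k, k(t) in the normal cone at x(t), with X^h(0,x) = x. Then there exists C = C(T, N, C_b, C_σ) such that for all x, y ∈ 𝒪: sup_{t∈[0,T]} |X^h(t,x) − X^h(t,y)| ≤ C|x − y|. -/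
open RealInnerProductSpace MeasureTheory

set_option maxHeartbeats 1000000
set_option linter.unusedSectionVars false
set_option linter.unusedVariables false

section AuxiliaryLemmas

open Set

variable {E : Type*} [NormedAddCommGroup E] [InnerProductSpace ℝ E] [CompleteSpace E]

lemma aux_inner_intervalIntegrable {f G : ℝ → E} {t : ℝ} (ht : 0 ≤ t)
    (hf : IntervalIntegrable f volume 0 t) (hG : ContinuousOn G (Icc 0 t)) :
    IntervalIntegrable (fun s => (⟪G s, f s⟫ : ℝ)) volume 0 t := by
  rw [intervalIntegrable_iff_integrableOn_Ioc_of_le ht] at hf ⊢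
  obtain ⟨x₀, hx₀, hmax⟩ := isCompact_Icc.exists_isMaxOn ⟨0, left_mem_Icc.2 ht⟩ hG.norm
  refine (hf.norm.const_mul ‖G x₀‖).mono' ?_ ?_
  · exact ((hG.mono Ioc_subset_Icc_self).aestronglyMeasurable measurableSet_Ioc).inner
      hf.aestronglyMeasurable
  · filter_upwards [ae_restrict_mem measurableSet_Ioc] with s hs
    calc ‖(⟪G s, f s⟫ : ℝ)‖ ≤ ‖G s‖ * ‖f s‖ := norm_inner_le_norm _ _
    _ ≤ ‖G x₀‖ * ‖f s‖ := by
        have := hmax (Ioc_subset_Icc_self hs)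
        exact mul_le_mul_of_nonneg_right this (norm_nonneg _)

lemma aux_swap {g : ℝ → E} {t : ℝ} (ht : 0 ≤ t)
    (hgm : StronglyMeasurable g) (hgi : IntegrableOn g (Ioc 0 t) volume) :
    ∫ u in Ioc (0:ℝ) t, (∫ s in Ioc u t, (⟪g u, g s⟫ : ℝ))
      = ∫ s in Ioc (0:ℝ) t, (∫ u in Ioc 0 s, (⟪g u, g s⟫ : ℝ)) := by
  set μ := volume.restrict (Ioc (0:ℝ) t) with hμ
  set H : ℝ → ℝ → ℝ := fun u s => if u ≤ s then (⟪g u, g s⟫ : ℝ) else 0 with hH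
  have hbase : StronglyMeasurable (fun p : ℝ × ℝ => (⟪g p.1, g p.2⟫ : ℝ)) :=
    continuous_inner.comp_stronglyMeasurable
      ((hgm.comp_measurable measurable_fst).prodMk (hgm.comp_measurable measurable_snd))
  have hHm : StronglyMeasurable (Function.uncurry H) := by
    have : Function.uncurry H = fun p : ℝ × ℝ =>
        ({q : ℝ × ℝ | q.1 ≤ q.2}).indicator (fun q => (⟪g q.1, g q.2⟫ : ℝ)) p := by
      ext p
      simp only [Function.uncurry, Set.indicator_apply, mem_setOf_eq, hH]
    rw [this]
    exact hbase.indicator (measurableSet_le measurable_fst measurable_snd)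
  have hint : Integrable (Function.uncurry H) (μ.prod μ) := by
    refine ((hgi.norm.mul_prod hgi.norm).mono' hHm.aestronglyMeasurable ?_)
    refine Filter.Eventually.of_forall fun p => ?_
    simp only [Function.uncurry, hH]
    split_ifs
    · exact norm_inner_le_norm _ _
    · simp [mul_nonneg (norm_nonneg _) (norm_nonneg _)]
  have hswap : ∫ u, (∫ s, H u s ∂μ) ∂μ = ∫ s, (∫ u, H u s ∂μ) ∂μ :=
    integral_integral_swap hint
  have hleft : ∀ u ∈ Ioc (0:ℝ) t, (∫ s, H u s ∂μ) = ∫ s in Ioc u t, (⟪g u, g s⟫ : ℝ) := by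
    intro u hu
    have h1 : (fun s => H u s) = fun s => (Ici u).indicator (fun s => (⟪g u, g s⟫ : ℝ)) s := by
      ext s; simp [hH, Set.indicator_apply]
    rw [hμ, h1, setIntegral_indicator measurableSet_Ici]
    have h2 : Ioc (0:ℝ) t ∩ Ici u = Icc u t := by
      ext s; simp only [mem_inter_iff, mem_Ioc, mem_Ici, mem_Icc]
      constructor
      · rintro ⟨⟨_, h⟩, h'⟩; exact ⟨h', h⟩
      · rintro ⟨h1', h2'⟩; exact ⟨⟨lt_of_lt_of_le hu.1 h1', h2'⟩, h1'⟩
    rw [h2, integral_Icc_eq_integral_Ioc]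
  have hright : ∀ s ∈ Ioc (0:ℝ) t, (∫ u, H u s ∂μ) = ∫ u in Ioc 0 s, (⟪g u, g s⟫ : ℝ) := by
    intro s hs
    have h1 : (fun u => H u s) = fun u => (Iic s).indicator (fun u => (⟪g u, g s⟫ : ℝ)) u := by
      ext u; simp [hH, Set.indicator_apply]
    rw [hμ, h1, setIntegral_indicator measurableSet_Iic]
    have h2 : Ioc (0:ℝ) t ∩ Iic s = Ioc 0 s := by
      rw [Ioc_inter_Iic, min_eq_right hs.2]
    rw [h2]
  calc ∫ u in Ioc (0:ℝ) t, (∫ s in Ioc u t, (⟪g u, g s⟫ : ℝ))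
      = ∫ u, (∫ s, H u s ∂μ) ∂μ :=
        (setIntegral_congr_fun measurableSet_Ioc fun u hu => (hleft u hu).symm)
    _ = ∫ s, (∫ u, H u s ∂μ) ∂μ := hswap
    _ = ∫ s in Ioc (0:ℝ) t, (∫ u in Ioc 0 s, (⟪g u, g s⟫ : ℝ)) :=
        setIntegral_congr_fun measurableSet_Ioc fun s hs => hright s hs

/-- Energy identity for a strongly measurable integrand. -/
lemma aux_energy_sm {g : ℝ → E} {t : ℝ} (ht : 0 ≤ t)
    (hgm : StronglyMeasurable g) (hgi : IntervalIntegrable g volume 0 t) :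
    ‖∫ s in (0:ℝ)..t, g s‖ ^ 2 = 2 * ∫ s in (0:ℝ)..t, (⟪∫ u in (0:ℝ)..s, g u, g s⟫ : ℝ) := by
  set F : ℝ → E := fun s => ∫ u in (0:ℝ)..s, g u with hF
  have hFc : ContinuousOn F (Icc 0 t) := by
    have := intervalIntegral.continuousOn_primitive_interval' hgi left_mem_uIcc
    rwa [uIcc_of_le ht] at this
  have hmono : ∀ {u : ℝ}, u ∈ Icc (0:ℝ) t → IntervalIntegrable g volume 0 u := by
    intro u hu
    exact hgi.mono_set (by rw [uIcc_of_le ht, uIcc_of_le hu.1]; exact Icc_subset_Icc le_rfl hu.2)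
  have hmono2 : ∀ {u : ℝ}, u ∈ Icc (0:ℝ) t → IntervalIntegrable g volume u t := by
    intro u hu
    exact hgi.mono_set (by rw [uIcc_of_le ht, uIcc_of_le hu.2]; exact Icc_subset_Icc hu.1 le_rfl)
  have h1 : IntervalIntegrable (fun u => (⟪F u, g u⟫ : ℝ)) volume 0 t :=
    aux_inner_intervalIntegrable ht hgi hFc
  have h2 : IntervalIntegrable (fun u => (⟪F t - F u, g u⟫ : ℝ)) volume 0 t :=
    aux_inner_intervalIntegrable ht hgi (continuousOn_const.sub hFc)
  have step1 : ‖F t‖ ^ 2 = ∫ u in (0:ℝ)..t, (⟪F t, g u⟫ : ℝ) := by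
    rw [← real_inner_self_eq_norm_sq]
    have := (innerSL ℝ (F t)).intervalIntegral_comp_comm hgi
    simp only [innerSL_apply_apply] at this
    rw [this]
  have step2 : ∫ u in (0:ℝ)..t, (⟪F t, g u⟫ : ℝ)
      = (∫ u in (0:ℝ)..t, (⟪F u, g u⟫ : ℝ)) + ∫ u in (0:ℝ)..t, (⟪F t - F u, g u⟫ : ℝ) := by
    rw [← intervalIntegral.integral_add h1 h2]
    apply intervalIntegral.integral_congr
    intro u hu
    simp only []
    rw [← inner_add_left]
    congr 1
    abel
  have step3 : ∫ u in (0:ℝ)..t, (⟪F t - F u, g u⟫ : ℝ)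
      = ∫ u in (0:ℝ)..t, (⟪F u, g u⟫ : ℝ) := by
    rw [intervalIntegral.integral_of_le ht, intervalIntegral.integral_of_le ht]
    have e1 : ∀ u ∈ Ioc (0:ℝ) t, (⟪F t - F u, g u⟫ : ℝ) = ∫ s in Ioc u t, (⟪g u, g s⟫ : ℝ) := by
      intro u hu
      have hadd : F u + ∫ s in u..t, g s = F t :=
        intervalIntegral.integral_add_adjacent_intervals (hmono (Ioc_subset_Icc_self hu))
          (hmono2 (Ioc_subset_Icc_self hu))
      have hdiff : F t - F u = ∫ s in u..t, g s := by rw [← hadd]; abel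
      have hclm := (innerSL ℝ (g u)).intervalIntegral_comp_comm (hmono2 (Ioc_subset_Icc_self hu))
      simp only [innerSL_apply_apply] at hclm
      rw [hdiff, real_inner_comm, ← hclm, intervalIntegral.integral_of_le hu.2]
    have e2 : ∀ s ∈ Ioc (0:ℝ) t, (∫ u in Ioc 0 s, (⟪g u, g s⟫ : ℝ)) = (⟪F s, g s⟫ : ℝ) := by
      intro s hs
      have hclm := (innerSL ℝ (g s)).intervalIntegral_comp_comm (hmono (Ioc_subset_Icc_self hs))
      simp only [innerSL_apply_apply] at hclm
      calc ∫ u in Ioc (0:ℝ) s, (⟪g u, g s⟫ : ℝ)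
          = ∫ u in (0:ℝ)..s, (⟪g u, g s⟫ : ℝ) := (intervalIntegral.integral_of_le hs.1.le).symm
        _ = ∫ u in (0:ℝ)..s, (⟪g s, g u⟫ : ℝ) :=
            intervalIntegral.integral_congr (fun u _ => real_inner_comm _ _)
        _ = (⟪g s, F s⟫ : ℝ) := hclm
        _ = (⟪F s, g s⟫ : ℝ) := real_inner_comm _ _
    calc ∫ u in Ioc (0:ℝ) t, (⟪F t - F u, g u⟫ : ℝ)
        = ∫ u in Ioc (0:ℝ) t, (∫ s in Ioc u t, (⟪g u, g s⟫ : ℝ)) :=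
          setIntegral_congr_fun measurableSet_Ioc e1
      _ = ∫ s in Ioc (0:ℝ) t, (∫ u in Ioc 0 s, (⟪g u, g s⟫ : ℝ)) := by
          apply aux_swap ht hgm
          rwa [intervalIntegrable_iff_integrableOn_Ioc_of_le ht] at hgi
      _ = ∫ s in Ioc (0:ℝ) t, (⟪F s, g s⟫ : ℝ) := setIntegral_congr_fun measurableSet_Ioc e2
  rw [step1, step2, step3]
  ring

/-- Energy identity for an interval integrable integrand. -/
lemma aux_energy {f : ℝ → E} {t : ℝ} (ht : 0 ≤ t)
    (hf : IntervalIntegrable f volume 0 t) :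
    ‖∫ s in (0:ℝ)..t, f s‖ ^ 2 = 2 * ∫ s in (0:ℝ)..t, (⟪∫ u in (0:ℝ)..s, f u, f s⟫ : ℝ) := by
  have hfI : IntegrableOn f (Ioc 0 t) volume := by
    rwa [intervalIntegrable_iff_integrableOn_Ioc_of_le ht] at hf
  set g : ℝ → E := hfI.aestronglyMeasurable.mk f with hg
  have hgm : StronglyMeasurable g := hfI.aestronglyMeasurable.stronglyMeasurable_mk
  have hfg : f =ᵐ[volume.restrict (Ioc 0 t)] g := hfI.aestronglyMeasurable.ae_eq_mk
  have hgI : IntegrableOn g (Ioc 0 t) volume := hfI.congr_fun_ae hfg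
  have hgi : IntervalIntegrable g volume 0 t := by
    rwa [intervalIntegrable_iff_integrableOn_Ioc_of_le ht]
  have hFeq : ∀ s ∈ Icc (0:ℝ) t, (∫ u in (0:ℝ)..s, f u) = ∫ u in (0:ℝ)..s, g u := by
    intro s hs
    rw [intervalIntegral.integral_of_le hs.1, intervalIntegral.integral_of_le hs.1]
    exact integral_congr_ae (ae_restrict_of_ae_restrict_of_subset (Ioc_subset_Ioc_right hs.2) hfg)
  have hIeq : (∫ s in (0:ℝ)..t, (⟪∫ u in (0:ℝ)..s, f u, f s⟫ : ℝ))
      = ∫ s in (0:ℝ)..t, (⟪∫ u in (0:ℝ)..s, g u, g s⟫ : ℝ) := by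
    rw [intervalIntegral.integral_of_le ht, intervalIntegral.integral_of_le ht]
    apply integral_congr_ae
    filter_upwards [hfg, ae_restrict_mem measurableSet_Ioc] with s hfs hs
    rw [hfs, hFeq s (Ioc_subset_Icc_self hs)]
  rw [hIeq, hFeq t (right_mem_Icc.2 ht)]
  exact aux_energy_sm ht hgm hgi

/-- Energy identity with an initial condition. -/
lemma aux_energy' {f : ℝ → E} (z₀ : E) {t : ℝ} (ht : 0 ≤ t)
    (hf : IntervalIntegrable f volume 0 t) :
    ‖z₀ + ∫ s in (0:ℝ)..t, f s‖ ^ 2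
      = ‖z₀‖ ^ 2 + 2 * ∫ s in (0:ℝ)..t, (⟪z₀ + ∫ u in (0:ℝ)..s, f u, f s⟫ : ℝ) := by
  set F : ℝ → E := fun s => ∫ u in (0:ℝ)..s, f u with hF
  have hFc : ContinuousOn F (Icc 0 t) := by
    have := intervalIntegral.continuousOn_primitive_interval' hf left_mem_uIcc
    rwa [uIcc_of_le ht] at this
  have h1 : IntervalIntegrable (fun s => (⟪z₀, f s⟫ : ℝ)) volume 0 t :=
    aux_inner_intervalIntegrable ht hf continuousOn_const
  have h2 : IntervalIntegrable (fun s => (⟪F s, f s⟫ : ℝ)) volume 0 t :=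
    aux_inner_intervalIntegrable ht hf hFc
  have hz : (⟪z₀, ∫ s in (0:ℝ)..t, f s⟫ : ℝ) = ∫ s in (0:ℝ)..t, (⟪z₀, f s⟫ : ℝ) := by
    have := (innerSL ℝ z₀).intervalIntegral_comp_comm hf
    simp only [innerSL_apply_apply] at this
    rw [this]
  have hsplit : ∫ s in (0:ℝ)..t, (⟪z₀ + F s, f s⟫ : ℝ)
      = (∫ s in (0:ℝ)..t, (⟪z₀, f s⟫ : ℝ)) + ∫ s in (0:ℝ)..t, (⟪F s, f s⟫ : ℝ) := by
    rw [← intervalIntegral.integral_add h1 h2]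
    exact intervalIntegral.integral_congr fun s _ => inner_add_left _ _ _
  rw [norm_add_sq_real, aux_energy ht hf, hz, hsplit]
  ring

noncomputable def gronC : ℕ → ℝ
  | 0 => 1
  | (n + 1) => 2 + (n : ℝ) * gronC n

lemma one_le_gronC : ∀ n, 1 ≤ gronC n := by
  intro n
  induction n with
  | zero => simp [gronC]
  | succ n ih =>
    simp only [gronC]
    nlinarith [Nat.cast_nonneg (α := ℝ) n]

lemma gronC_le_succ (n : ℕ) : gronC n ≤ gronC (n + 1) := by
  cases n with
  | zero => norm_num [gronC]
  | succ k =>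
    have h1 : (1:ℝ) ≤ gronC (k + 1) := one_le_gronC (k + 1)
    have h2 : gronC (k + 1 + 1) = 2 + ((k + 1 : ℕ) : ℝ) * gronC (k + 1) := rfl
    rw [h2]
    push_cast
    nlinarith [Nat.cast_nonneg (α := ℝ) k]

lemma gronwall_halving {φ g : ℝ → ℝ} {T A : ℝ} (hT : 0 ≤ T) (hA : 0 ≤ A)
    (hφc : ContinuousOn φ (Icc 0 T)) (hφ0 : ∀ t ∈ Icc 0 T, 0 ≤ φ t)
    (hg : IntervalIntegrable g volume 0 T) (hg0 : ∀ s, 0 ≤ g s)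
    (hineq : ∀ t ∈ Icc 0 T, φ t ≤ A + ∫ s in (0:ℝ)..t, g s * φ s) :
    ∀ n : ℕ, ∀ t ∈ Icc 0 T, (∫ s in (0:ℝ)..t, g s) ≤ n / 2 → φ t ≤ gronC n * A := by
  set G : ℝ → ℝ := fun s => ∫ x in (0:ℝ)..s, g x with hGdef
  have hmono : ∀ {a c : ℝ}, 0 ≤ a → c ≤ T → a ≤ c → IntervalIntegrable g volume a c := by
    intro a c ha hc hac
    exact hg.mono_set (by rw [uIcc_of_le hT, uIcc_of_le hac]; exact Icc_subset_Icc ha hc)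
  have hGc : ContinuousOn G (Icc 0 T) := by
    have := intervalIntegral.continuousOn_primitive_interval' hg left_mem_uIcc
    rwa [uIcc_of_le hT] at this
  have hGadd : ∀ {a c : ℝ}, a ∈ Icc 0 T → c ∈ Icc 0 T → a ≤ c →
      G a + ∫ s in a..c, g s = G c := by
    intro a c ha hc hac
    exact intervalIntegral.integral_add_adjacent_intervals (hmono le_rfl ha.2 ha.1)
      (hmono ha.1 hc.2 hac)
  have hGmono : ∀ {a c : ℝ}, a ∈ Icc 0 T → c ∈ Icc 0 T → a ≤ c → G a ≤ G c := by
    intro a c ha hc hac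
    have h1 := hGadd ha hc hac
    have h2 : 0 ≤ ∫ s in a..c, g s :=
      intervalIntegral.integral_nonneg hac fun u _ => hg0 u
    linarith
  have hgφ : ∀ {a c : ℝ}, 0 ≤ a → c ≤ T → a ≤ c →
      IntervalIntegrable (fun s => g s * φ s) volume a c := by
    intro a c ha hc hac
    exact (hmono ha hc hac).mul_continuousOn
      (hφc.mono (by rw [uIcc_of_le hac]; exact Icc_subset_Icc ha hc))
  intro n
  induction n with
  | zero =>
    intro t ht hGt
    have hG0 : 0 ≤ G t := intervalIntegral.integral_nonneg ht.1 fun u _ => hg0 u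
    have hGz : G t = 0 := le_antisymm (by simpa using hGt) hG0
    obtain ⟨x₀, hx₀, hmax⟩ := isCompact_Icc.exists_isMaxOn ⟨0, left_mem_Icc.2 hT⟩ hφc
    have hM0 : 0 ≤ φ x₀ := hφ0 x₀ hx₀
    have hb : ∫ s in (0:ℝ)..t, g s * φ s ≤ ∫ s in (0:ℝ)..t, g s * φ x₀ := by
      apply intervalIntegral.integral_mono_on ht.1 (hgφ le_rfl ht.2 ht.1)
        ((hmono le_rfl ht.2 ht.1).mul_const _)
      intro s hs
      exact mul_le_mul_of_nonneg_left (hmax (Icc_subset_Icc le_rfl ht.2 hs)) (hg0 s)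
    have hc : ∫ s in (0:ℝ)..t, g s * φ x₀ = G t * φ x₀ := intervalIntegral.integral_mul_const _ _
    have := hineq t ht
    rw [show gronC 0 = 1 from rfl, one_mul]
    calc φ t ≤ A + ∫ s in (0:ℝ)..t, g s * φ s := this
      _ ≤ A + G t * φ x₀ := by rw [← hc]; linarith
      _ = A := by rw [hGz]; ring
  | succ n ih =>
    intro t ht hGt
    have hhalf : ((n:ℝ) + 1) / 2 = ((n + 1 : ℕ) : ℝ) / 2 := by push_cast; ring
    set K : Set ℝ := Icc 0 T ∩ G ⁻¹' (Iic (((n:ℝ) + 1) / 2)) with hK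
    have hKcl : IsClosed K := hGc.preimage_isClosed_of_isClosed isClosed_Icc isClosed_Iic
    have hKcp : IsCompact K := isCompact_Icc.of_isClosed_subset hKcl inter_subset_left
    have hK0 : (0:ℝ) ∈ K := by
      refine ⟨left_mem_Icc.2 hT, ?_⟩
      simp only [mem_preimage, mem_Iic, hGdef]
      rw [intervalIntegral.integral_same]
      positivity
    obtain ⟨ts, htsK, htsmax⟩ := hKcp.exists_isMaxOn ⟨0, hK0⟩ (hφc.mono inter_subset_left)
    have htsT : ts ∈ Icc 0 T := htsK.1
    have htK : t ∈ K := ⟨ht, by rw [mem_preimage, mem_Iic, hhalf]; exact hGt⟩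
    have hts_bound : φ ts ≤ gronC (n + 1) * A := by
      by_cases hcase : G ts ≤ n / 2
      · calc φ ts ≤ gronC n * A := ih ts htsT hcase
          _ ≤ gronC (n + 1) * A := mul_le_mul_of_nonneg_right (gronC_le_succ n) hA
      · push_neg at hcase
        have hGts : G ts ≤ ((n:ℝ) + 1) / 2 := htsK.2
        have hG00 : G 0 = 0 := intervalIntegral.integral_same
        obtain ⟨u, hu, hGu⟩ : ∃ u ∈ Icc 0 ts, G u = (n:ℝ) / 2 := by
          have hiv := intermediate_value_Icc htsT.1 (hGc.mono (Icc_subset_Icc le_rfl htsT.2))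
          have : ((n:ℝ) / 2) ∈ Icc (G 0) (G ts) := by
            rw [hG00]; exact ⟨by positivity, hcase.le⟩
          obtain ⟨u, hu1, hu2⟩ := hiv this
          exact ⟨u, hu1, hu2⟩
        have huT : u ∈ Icc 0 T := ⟨hu.1, hu.2.trans htsT.2⟩
        have hsplit : (∫ s in (0:ℝ)..ts, g s * φ s)
            = (∫ s in (0:ℝ)..u, g s * φ s) + ∫ s in u..ts, g s * φ s :=
          (intervalIntegral.integral_add_adjacent_intervals (hgφ le_rfl huT.2 hu.1)
            (hgφ hu.1 htsT.2 hu.2)).symm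
        have hb1 : (∫ s in (0:ℝ)..u, g s * φ s) ≤ (n:ℝ) / 2 * (gronC n * A) := by
          have h1 : (∫ s in (0:ℝ)..u, g s * φ s) ≤ ∫ s in (0:ℝ)..u, g s * (gronC n * A) := by
            apply intervalIntegral.integral_mono_on hu.1 (hgφ le_rfl huT.2 hu.1)
              ((hmono le_rfl huT.2 hu.1).mul_const _)
            intro s hs
            have hsT : s ∈ Icc 0 T := ⟨hs.1, hs.2.trans huT.2⟩
            have hGs : G s ≤ (n:ℝ) / 2 := by
              rw [← hGu]; exact hGmono hsT huT hs.2
            exact mul_le_mul_of_nonneg_left (ih s hsT hGs) (hg0 s)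
          rw [intervalIntegral.integral_mul_const] at h1
          calc (∫ s in (0:ℝ)..u, g s * φ s) ≤ G u * (gronC n * A) := h1
            _ = (n:ℝ) / 2 * (gronC n * A) := by rw [hGu]
        have hb2 : (∫ s in u..ts, g s * φ s) ≤ (1 / 2) * φ ts := by
          have hφts0 : 0 ≤ φ ts := hφ0 ts htsT
          have h1 : (∫ s in u..ts, g s * φ s) ≤ ∫ s in u..ts, g s * φ ts := by
            apply intervalIntegral.integral_mono_on hu.2 (hgφ hu.1 htsT.2 hu.2)
              ((hmono hu.1 htsT.2 hu.2).mul_const _)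
            intro s hs
            have hsT : s ∈ Icc 0 T := ⟨hu.1.trans hs.1, hs.2.trans htsT.2⟩
            have hsK : s ∈ K := ⟨hsT, by
              rw [mem_preimage, mem_Iic]
              exact (hGmono hsT htsT hs.2).trans hGts⟩
            exact mul_le_mul_of_nonneg_left (htsmax hsK) (hg0 s)
          rw [intervalIntegral.integral_mul_const] at h1
          have h2 : (∫ s in u..ts, g s) = G ts - G u := by
            have := hGadd huT htsT hu.2
            linarith
          have h3 : G ts - G u ≤ 1 / 2 := by rw [hGu]; linarith
          calc (∫ s in u..ts, g s * φ s) ≤ (∫ s in u..ts, g s) * φ ts := h1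
            _ = (G ts - G u) * φ ts := by rw [h2]
            _ ≤ (1 / 2) * φ ts := mul_le_mul_of_nonneg_right h3 hφts0
        have hfinal := hineq ts htsT
        rw [hsplit] at hfinal
        have : φ ts ≤ 2 * A + (n:ℝ) * (gronC n * A) := by linarith
        calc φ ts ≤ 2 * A + (n:ℝ) * (gronC n * A) := this
          _ = gronC (n + 1) * A := by rw [show gronC (n+1) = 2 + (n:ℝ) * gronC n from rfl]; ring
    exact (htsmax htK).trans hts_bound

end AuxiliaryLemmas

open Set in
/-- Lipschitz dependence of the skeleton flow on the initial condition,
uniformly over controls of `L²`-norm at most `N`. -/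
theorem skeleton_flow_lipschitz_in_initial_condition
    (m d : ℕ) (T N Cb Cσ : ℝ) (hT : 0 < T) (hN : 0 < N)
    (b : EuclideanSpace ℝ (Fin m) → EuclideanSpace ℝ (Fin m)) (hbc : Continuous b)
    (hb : ∀ x y, ⟪x - y, b x - b y⟫ ≤ Cb * ‖x - y‖ ^ 2)
    (σ : EuclideanSpace ℝ (Fin m) → (EuclideanSpace ℝ (Fin d) →L[ℝ] EuclideanSpace ℝ (Fin m)))
    (hσ : LipschitzWith (Real.toNNReal Cσ) σ)
    (O : Set (EuclideanSpace ℝ (Fin m))) (hclosed : IsClosed O) (hconv : Convex ℝ O) :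
    ∃ C : ℝ, ∀ (hdot : ℝ → EuclideanSpace ℝ (Fin d)),
      MemLp hdot 2 (volume.restrict (Set.Icc (0:ℝ) T)) →
      (∫ s in (0:ℝ)..T, ‖hdot s‖ ^ 2) ≤ N ^ 2 →
      ∀ (x y : EuclideanSpace ℝ (Fin m)) (X Y kX kY : ℝ → EuclideanSpace ℝ (Fin m)),
      x ∈ O → y ∈ O →
      (∀ t ∈ Set.Icc 0 T, X t ∈ O) → (∀ t ∈ Set.Icc 0 T, Y t ∈ O) →
      IntervalIntegrable (fun s => b (X s) + σ (X s) (hdot s) - kX s) volume 0 T →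
      IntervalIntegrable (fun s => b (Y s) + σ (Y s) (hdot s) - kY s) volume 0 T →
      X 0 = x → Y 0 = y →
      (∀ t ∈ Set.Icc 0 T, X t = x + ∫ s in (0:ℝ)..t, (b (X s) + σ (X s) (hdot s) - kX s)) →
      (∀ t ∈ Set.Icc 0 T, Y t = y + ∫ s in (0:ℝ)..t, (b (Y s) + σ (Y s) (hdot s) - kY s)) →
      (∀ᵐ t ∂(volume.restrict (Set.Icc (0:ℝ) T)), ∀ z ∈ O, ⟪kX t, X t - z⟫ ≥ 0) →
      (∀ᵐ t ∂(volume.restrict (Set.Icc (0:ℝ) T)), ∀ z ∈ O, ⟪kY t, Y t - z⟫ ≥ 0) →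
      ∀ t ∈ Set.Icc 0 T, ‖X t - Y t‖ ≤ C * ‖x - y‖ := by
  classical
  set Cb' : ℝ := max Cb 0 with hCb'
  set Cσ' : ℝ := max Cσ 0 with hCσ'
  have hCb'0 : 0 ≤ Cb' := le_max_right _ _
  have hCσ'0 : 0 ≤ Cσ' := le_max_right _ _
  set B : ℝ := (2 * Cb' + Cσ') * T + Cσ' * N ^ 2 with hBdef
  have hB0 : 0 ≤ B := by positivity
  set n : ℕ := ⌈2 * B⌉₊ with hn
  refine ⟨Real.sqrt (gronC n), ?_⟩
  intro hdot hmem hN2 x y X Y kX kY hx hy hXO hYO hIX hIY hX0 hY0 hXeq hYeq hkX hkY t ht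
  set f : ℝ → EuclideanSpace ℝ (Fin m) :=
    fun s => (b (X s) + σ (X s) (hdot s) - kX s) - (b (Y s) + σ (Y s) (hdot s) - kY s) with hfdef
  have hfT : IntervalIntegrable f volume 0 T := hIX.sub hIY
  have hsub : ∀ {t' : ℝ}, t' ∈ Icc (0:ℝ) T → uIcc (0:ℝ) t' ⊆ uIcc (0:ℝ) T := by
    intro t' ht'
    rw [uIcc_of_le hT.le, uIcc_of_le ht'.1]
    exact Icc_subset_Icc le_rfl ht'.2
  have hmono : ∀ {t' : ℝ}, t' ∈ Icc (0:ℝ) T → IntervalIntegrable f volume 0 t' :=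
    fun ht' => hfT.mono_set (hsub ht')
  set F : ℝ → EuclideanSpace ℝ (Fin m) := fun s => ∫ u in (0:ℝ)..s, f u with hFdef
  set Z : ℝ → EuclideanSpace ℝ (Fin m) := fun s => (x - y) + F s with hZdef
  have hZeq : ∀ s ∈ Icc (0:ℝ) T, X s - Y s = Z s := by
    intro s hs
    have hintsub := intervalIntegral.integral_sub (hIX.mono_set (hsub hs)) (hIY.mono_set (hsub hs))
    calc X s - Y s
        = (x + ∫ u in (0:ℝ)..s, (b (X u) + σ (X u) (hdot u) - kX u))
          - (y + ∫ u in (0:ℝ)..s, (b (Y u) + σ (Y u) (hdot u) - kY u)) := by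
          rw [← hXeq s hs, ← hYeq s hs]
      _ = (x - y) + ((∫ u in (0:ℝ)..s, (b (X u) + σ (X u) (hdot u) - kX u))
          - ∫ u in (0:ℝ)..s, (b (Y u) + σ (Y u) (hdot u) - kY u)) := by abel
      _ = Z s := by rw [← hintsub]
  have hFc : ContinuousOn F (Icc 0 T) := by
    have := intervalIntegral.continuousOn_primitive_interval' hfT left_mem_uIcc
    rwa [uIcc_of_le hT.le] at this
  have hZc : ContinuousOn Z (Icc 0 T) := continuousOn_const.add hFc
  set φ : ℝ → ℝ := fun s => ‖Z s‖ ^ 2 with hφdef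
  have hφc : ContinuousOn φ (Icc 0 T) := (hZc.norm).pow 2
  have hφ0 : ∀ s ∈ Icc (0:ℝ) T, 0 ≤ φ s := fun s _ => sq_nonneg _
  set g : ℝ → ℝ := fun s => (2 * Cb' + Cσ') + Cσ' * ‖hdot s‖ ^ 2 with hgdef
  have hg0 : ∀ s, 0 ≤ g s := by intro s; positivity
  have hhsq : IntervalIntegrable (fun s => ‖hdot s‖ ^ 2) volume 0 T := by
    rw [intervalIntegrable_iff_integrableOn_Ioc_of_le hT.le]
    have h1 : IntegrableOn (fun s => ‖hdot s‖ ^ 2) (Icc 0 T) volume := hmem.norm.integrable_sq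
    exact h1.mono_set Ioc_subset_Icc_self
  have hgT : IntervalIntegrable g volume 0 T :=
    intervalIntegrable_const.add (hhsq.const_mul Cσ')
  -- the key integral inequality
  have hkey : ∀ t' ∈ Icc (0:ℝ) T, φ t' ≤ ‖x - y‖ ^ 2 + ∫ s in (0:ℝ)..t', g s * φ s := by
    intro t' ht'
    have henergy := aux_energy' (x - y) ht'.1 (hmono ht')
    have hφt' : φ t' = ‖(x - y) + ∫ s in (0:ℝ)..t', f s‖ ^ 2 := rfl
    rw [hφt', henergy]
    have hLi : IntervalIntegrable (fun s => (⟪Z s, f s⟫ : ℝ)) volume 0 t' :=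
      aux_inner_intervalIntegrable ht'.1 (hmono ht')
        (hZc.mono (Icc_subset_Icc le_rfl ht'.2))
    have hRi : IntervalIntegrable (fun s => g s * φ s) volume 0 t' :=
      (hgT.mono_set (hsub ht')).mul_continuousOn
        (hφc.mono (by rw [uIcc_of_le ht'.1]; exact Icc_subset_Icc le_rfl ht'.2))
    have hmono_int : (∫ s in (0:ℝ)..t', (2 * (⟪Z s, f s⟫ : ℝ)))
        ≤ ∫ s in (0:ℝ)..t', g s * φ s := by
      apply intervalIntegral.integral_mono_ae_restrict ht'.1 (hLi.const_mul 2) hRi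
      have hkX' := ae_restrict_of_ae_restrict_of_subset (Icc_subset_Icc le_rfl ht'.2) hkX
      have hkY' := ae_restrict_of_ae_restrict_of_subset (Icc_subset_Icc le_rfl ht'.2) hkY
      filter_upwards [hkX', hkY', ae_restrict_mem measurableSet_Icc] with s hskX hskY hs
      have hsT : s ∈ Icc (0:ℝ) T := ⟨hs.1, hs.2.trans ht'.2⟩
      have hZs : Z s = X s - Y s := (hZeq s hsT).symm
      set zs := X s - Y s with hzs
      have hfs : f s = (b (X s) - b (Y s)) + (σ (X s) (hdot s) - σ (Y s) (hdot s))
          - (kX s - kY s) := by rw [hfdef]; abel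
      have hinner : (⟪Z s, f s⟫ : ℝ) = ⟪zs, b (X s) - b (Y s)⟫
          + ⟪zs, σ (X s) (hdot s) - σ (Y s) (hdot s)⟫ - ⟪zs, kX s - kY s⟫ := by
        rw [hZs, hfs, inner_sub_right, inner_add_right]
      have t1 : (⟪zs, b (X s) - b (Y s)⟫ : ℝ) ≤ Cb' * ‖zs‖ ^ 2 :=
        (hb (X s) (Y s)).trans (mul_le_mul_of_nonneg_right (le_max_left _ _) (sq_nonneg _))
      have t2 : (⟪zs, σ (X s) (hdot s) - σ (Y s) (hdot s)⟫ : ℝ)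
          ≤ Cσ' * ‖hdot s‖ * ‖zs‖ ^ 2 := by
        have e1 : σ (X s) (hdot s) - σ (Y s) (hdot s) = (σ (X s) - σ (Y s)) (hdot s) := by
          simp [ContinuousLinearMap.sub_apply]
        have hop : ‖σ (X s) - σ (Y s)‖ ≤ Cσ' * ‖zs‖ := by
          have := hσ.dist_le_mul (X s) (Y s)
          rw [dist_eq_norm, dist_eq_norm] at this
          rw [hCσ']
          calc ‖σ (X s) - σ (Y s)‖ ≤ (Real.toNNReal Cσ : ℝ) * ‖X s - Y s‖ := this
            _ = max Cσ 0 * ‖zs‖ := by rw [Real.coe_toNNReal']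
        calc (⟪zs, σ (X s) (hdot s) - σ (Y s) (hdot s)⟫ : ℝ)
            ≤ ‖zs‖ * ‖σ (X s) (hdot s) - σ (Y s) (hdot s)‖ := real_inner_le_norm _ _
          _ ≤ ‖zs‖ * (‖σ (X s) - σ (Y s)‖ * ‖hdot s‖) := by
              rw [e1]
              exact mul_le_mul_of_nonneg_left
                ((σ (X s) - σ (Y s)).le_opNorm (hdot s)) (norm_nonneg _)
          _ ≤ ‖zs‖ * ((Cσ' * ‖zs‖) * ‖hdot s‖) := by
              exact mul_le_mul_of_nonneg_left
                (mul_le_mul_of_nonneg_right hop (norm_nonneg _)) (norm_nonneg _)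
          _ = Cσ' * ‖hdot s‖ * ‖zs‖ ^ 2 := by ring
      have t3 : (0:ℝ) ≤ ⟪zs, kX s - kY s⟫ := by
        have hA := hskX (Y s) (hYO s hsT)
        have hB := hskY (X s) (hXO s hsT)
        have hA' : (0:ℝ) ≤ ⟪zs, kX s⟫ := by
          rw [real_inner_comm]; exact hA
        have hB' : (⟪zs, kY s⟫ : ℝ) ≤ 0 := by
          have : (0:ℝ) ≤ ⟪kY s, Y s - X s⟫ := hB
          have h2 : (⟪kY s, Y s - X s⟫ : ℝ) = - ⟪kY s, zs⟫ := by
            rw [hzs, show Y s - X s = -(X s - Y s) by abel, inner_neg_right]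
          rw [real_inner_comm]
          linarith [h2 ▸ this]
        rw [inner_sub_right]
        linarith
      have hφs : φ s = ‖zs‖ ^ 2 := by rw [hφdef]; simp only []; rw [hZs]
      have hgs : g s = (2 * Cb' + Cσ') + Cσ' * ‖hdot s‖ ^ 2 := rfl
      rw [hgs, hφs]
      have hns : 0 ≤ ‖hdot s‖ := norm_nonneg _
      nlinarith [hinner, t1, t2, t3,
        mul_nonneg (mul_nonneg hCσ'0 (sq_nonneg (‖hdot s‖ - 1))) (sq_nonneg ‖zs‖)]
    calc ‖x - y‖ ^ 2 + 2 * ∫ s in (0:ℝ)..t', (⟪(x - y) + ∫ u in (0:ℝ)..s, f u, f s⟫ : ℝ)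
        = ‖x - y‖ ^ 2 + ∫ s in (0:ℝ)..t', (2 * (⟪Z s, f s⟫ : ℝ)) := by
          rw [intervalIntegral.integral_const_mul]
      _ ≤ ‖x - y‖ ^ 2 + ∫ s in (0:ℝ)..t', g s * φ s := by linarith
  -- total mass bound
  have hGT : (∫ s in (0:ℝ)..T, g s) ≤ B := by
    have hsplit : (∫ s in (0:ℝ)..T, g s)
        = (2 * Cb' + Cσ') * T + Cσ' * ∫ s in (0:ℝ)..T, ‖hdot s‖ ^ 2 := by
      rw [hgdef]
      rw [intervalIntegral.integral_add intervalIntegrable_const (hhsq.const_mul Cσ'),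
        intervalIntegral.integral_const, intervalIntegral.integral_const_mul]
      simp [smul_eq_mul]
      ring
    rw [hsplit, hBdef]
    have := mul_le_mul_of_nonneg_left hN2 hCσ'0
    linarith
  -- apply Gronwall
  have hGt : (∫ s in (0:ℝ)..t, g s) ≤ (n:ℝ) / 2 := by
    have h1 : (∫ s in (0:ℝ)..t, g s) ≤ ∫ s in (0:ℝ)..T, g s := by
      have hadd := intervalIntegral.integral_add_adjacent_intervals
        (hgT.mono_set (hsub ht))
        (hgT.mono_set (by rw [uIcc_of_le hT.le, uIcc_of_le ht.2]; exact Icc_subset_Icc ht.1 le_rfl))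
      have h2 : 0 ≤ ∫ s in t..T, g s :=
        intervalIntegral.integral_nonneg ht.2 fun u _ => hg0 u
      linarith
    have h3 : 2 * B ≤ (n:ℝ) := Nat.le_ceil _
    linarith
  have hmain := gronwall_halving hT.le (sq_nonneg ‖x - y‖) hφc hφ0 hgT hg0 hkey n t ht hGt
  -- conclude
  have hfin : ‖X t - Y t‖ ^ 2 ≤ gronC n * ‖x - y‖ ^ 2 := by
    rw [hZeq t ht]; exact hmain
  have hgron0 : (0:ℝ) ≤ gronC n := le_trans zero_le_one (one_le_gronC n)
  have := Real.sqrt_le_sqrt hfin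
  rw [Real.sqrt_sq (norm_nonneg _), Real.sqrt_mul hgron0, Real.sqrt_sq (norm_nonneg _)] at this
  exact this
end

section
/- Under the assumptions of the previous context (one-sided Lipschitz b with linear growth |b(x)| ≤ C'_b(1+|x|), Lipschitz σ, 𝒪 closed convex, ‖ḣ‖_{L²} ≤ N), any solution X^h(·,x) of the skeleton equation x' = b(x) + σ(x)ḣ − k with k in the normal cone satisfies sup_{t∈[0,T]} |X^h(t,x)| ≤ C(T, N, |x|) for a constant depending only on T, N, |x| and the constants of b and σ. -/
set_option maxHeartbeats 1000000

open RealInnerProductSpace MeasureTheory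

lemma energy_identity {E : Type*} [NormedAddCommGroup E] [InnerProductSpace ℝ E]
    [CompleteSpace E] (f : ℝ → E) (t : ℝ) (hf : IntegrableOn f (Set.Ioc 0 t)) :
    IntegrableOn (fun s => ⟪f s, ∫ r in Set.Ioc 0 s, f r⟫) (Set.Ioc 0 t) ∧
    ‖∫ s in Set.Ioc 0 t, f s‖ ^ 2 = 2 * ∫ s in Set.Ioc 0 t, ⟪f s, ∫ r in Set.Ioc 0 s, f r⟫ := by
  set μ := volume.restrict (Set.Ioc 0 t) with hμ
  have hfμ : Integrable f μ := hf
  set F : ℝ × ℝ → ℝ := fun p => ⟪f p.1, f p.2⟫ with hF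
  have hFmeas : AEStronglyMeasurable F (μ.prod μ) := by
    have h1 : AEStronglyMeasurable (fun p : ℝ × ℝ => f p.1) (μ.prod μ) :=
      hfμ.aestronglyMeasurable.comp_fst
    have h2 : AEStronglyMeasurable (fun p : ℝ × ℝ => f p.2) (μ.prod μ) :=
      hfμ.aestronglyMeasurable.comp_snd
    exact continuous_inner.comp_aestronglyMeasurable (h1.prodMk h2)
  have hFint : Integrable F (μ.prod μ) := by
    refine Integrable.mono (hfμ.norm.mul_prod hfμ.norm) hFmeas ?_
    refine Filter.Eventually.of_forall fun p => ?_
    simp only [Real.norm_eq_abs, norm_mul, abs_norm]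
    exact (abs_real_inner_le_norm _ _).trans le_rfl
  set D : Set (ℝ × ℝ) := {p | p.2 ≤ p.1} with hDdef
  have hD : MeasurableSet D := measurableSet_le measurable_snd measurable_fst
  -- total integral
  have htot : ∫ p, F p ∂(μ.prod μ) = ‖∫ s, f s ∂μ‖ ^ 2 := by
    rw [integral_prod _ hFint]
    have h1 : ∀ s, ∫ r, ⟪f s, f r⟫ ∂μ = ⟪f s, ∫ r, f r ∂μ⟫ := fun s => integral_inner hfμ (f s)
    simp_rw [hF, h1]
    have h2 : ∀ s, ⟪f s, ∫ r, f r ∂μ⟫ = ⟪(∫ r, f r ∂μ), f s⟫ := fun s => real_inner_comm _ _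
    simp_rw [h2]
    rw [integral_inner hfμ, real_inner_self_eq_norm_sq]
  -- diagonal is null
  have hdiag : (μ.prod μ) {p : ℝ × ℝ | p.1 = p.2} = 0 := by
    have hΔ : MeasurableSet {p : ℝ × ℝ | p.1 = p.2} :=
      measurableSet_eq_fun measurable_fst measurable_snd
    rw [Measure.prod_apply hΔ]
    have h0 : ∀ s : ℝ, μ (Prod.mk s ⁻¹' {p : ℝ × ℝ | p.1 = p.2}) = 0 := by
      intro s
      have h1 : Prod.mk s ⁻¹' {p : ℝ × ℝ | p.1 = p.2} = {s} := by ext r; simp [eq_comm]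
      rw [h1, hμ, Measure.restrict_apply (measurableSet_singleton s)]
      exact measure_mono_null Set.inter_subset_left (measure_singleton s)
    simp [h0]
  -- swap symmetry
  have hswap : ∫ p in Dᶜ, F p ∂(μ.prod μ) = ∫ p in D, F p ∂(μ.prod μ) := by
    rw [← integral_indicator hD.compl, ← integral_indicator hD]
    have hmp : MeasurePreserving (Prod.swap : ℝ × ℝ → ℝ × ℝ) (μ.prod μ) (μ.prod μ) :=
      Measure.measurePreserving_swap
    have e1 : ∫ p, Dᶜ.indicator F p ∂(μ.prod μ)
        = ∫ p, Dᶜ.indicator F (Prod.swap p) ∂(μ.prod μ) :=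
      (hmp.integral_comp MeasurableEquiv.prodComm.measurableEmbedding _).symm
    rw [e1]
    apply integral_congr_ae
    have hne : ∀ᵐ p ∂(μ.prod μ), ¬ ((p : ℝ × ℝ).1 = p.2) := by
      rw [ae_iff]; simpa using hdiag
    filter_upwards [hne] with p hp
    by_cases h : p.2 ≤ p.1
    · have h' : ¬ ((Prod.swap p).2 ≤ (Prod.swap p).1) := by
        simp only [Prod.snd_swap, Prod.fst_swap]
        exact fun hc => hp (le_antisymm hc h)
      have hmem : Prod.swap p ∈ Dᶜ := h'
      have hmem2 : p ∈ D := h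
      rw [Set.indicator_of_mem hmem, Set.indicator_of_mem hmem2]
      simp only [hF, Prod.fst_swap, Prod.snd_swap]
      exact real_inner_comm _ _
    · have hmem : Prod.swap p ∉ Dᶜ := by
        simp only [hDdef, Set.mem_compl_iff, Set.mem_setOf_eq, Prod.snd_swap, Prod.fst_swap,
          not_not]
        exact le_of_not_ge h
      have hmem2 : p ∉ D := h
      rw [Set.indicator_of_notMem hmem, Set.indicator_of_notMem hmem2]
  have hindint : Integrable (D.indicator F) (μ.prod μ) := hFint.indicator hD
  have h5a : Integrable (fun s => ∫ r, D.indicator F (s, r) ∂μ) μ := hindint.integral_prod_left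
  have hinner : ∀ᵐ s ∂μ, (∫ r, D.indicator F (s, r) ∂μ)
      = ⟪f s, ∫ r in Set.Ioc 0 s, f r⟫ := by
    rw [hμ]
    filter_upwards [ae_restrict_mem measurableSet_Ioc] with s hs
    have hfun : (fun r => D.indicator F (s, r)) = (Set.Iic s).indicator fun r => ⟪f s, f r⟫ := by
      funext r
      by_cases h : r ≤ s
      · simp [Set.indicator_apply, hDdef, Set.mem_Iic, h, hF]
      · simp [Set.indicator_apply, hDdef, Set.mem_Iic, h, hF]
    rw [hfun, integral_indicator measurableSet_Iic,
      Measure.restrict_restrict measurableSet_Iic]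
    have hset : Set.Iic s ∩ Set.Ioc 0 t = Set.Ioc 0 s := by
      ext r
      simp only [Set.mem_inter_iff, Set.mem_Iic, Set.mem_Ioc]
      exact ⟨fun ⟨h1, h2, _⟩ => ⟨h2, h1⟩, fun ⟨h1, h2⟩ => ⟨h2, h1, h2.trans hs.2⟩⟩
    rw [hset]
    exact integral_inner (hf.mono_set (Set.Ioc_subset_Ioc le_rfl hs.2)) (f s)
  have h5int : Integrable (fun s => ⟪f s, ∫ r in Set.Ioc 0 s, f r⟫) μ := h5a.congr hinner
  have h5 : ∫ p in D, F p ∂(μ.prod μ) = ∫ s, ⟪f s, ∫ r in Set.Ioc 0 s, f r⟫ ∂μ := by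
    rw [← integral_indicator hD, integral_prod _ hindint]
    exact integral_congr_ae hinner
  have hadd : (∫ p in D, F p ∂(μ.prod μ)) + ∫ p in Dᶜ, F p ∂(μ.prod μ) = ∫ p, F p ∂(μ.prod μ) :=
    integral_add_compl hD hFint
  refine ⟨h5int, ?_⟩
  rw [← htot, ← hadd, hswap, h5]
  ring

lemma gronwall_aux (φ g ψ : ℝ → ℝ) (T : ℝ) (hT : 0 ≤ T)
    (hφc : ContinuousOn φ (Set.Icc 0 T)) (hφ0 : φ 0 = 0)
    (hg : IntegrableOn g (Set.Ioc 0 T)) (hgnn : ∀ s, 0 ≤ g s)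
    (hψ : IntegrableOn ψ (Set.Ioc 0 T))
    (hψle : ∀ᵐ s ∂(volume.restrict (Set.Ioc 0 T)), ψ s ≤ g s * (1 + φ s))
    (heq : ∀ t ∈ Set.Icc 0 T, φ t = ∫ s in Set.Ioc 0 t, ψ s) :
    ∀ n : ℕ, ∀ t ∈ Set.Icc (0:ℝ) T, (∫ s in Set.Ioc 0 t, g s) ≤ n / 2 →
      1 + φ t ≤ 2 ^ (n + 1) := by
  set G : ℝ → ℝ := fun t => ∫ s in Set.Ioc 0 t, g s with hGdef
  -- additivity
  have hadd : ∀ (f : ℝ → ℝ), IntegrableOn f (Set.Ioc 0 T) → ∀ t₀ t₁, 0 ≤ t₀ → t₀ ≤ t₁ → t₁ ≤ T →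
      (∫ s in Set.Ioc 0 t₁, f s) = (∫ s in Set.Ioc 0 t₀, f s) + ∫ s in Set.Ioc t₀ t₁, f s := by
    intro f hf t₀ t₁ h0 h1 h2
    rw [← setIntegral_union (Set.Ioc_disjoint_Ioc_of_le le_rfl) measurableSet_Ioc
      (hf.mono_set (Set.Ioc_subset_Ioc le_rfl (h1.trans h2)))
      (hf.mono_set (Set.Ioc_subset_Ioc (by linarith) h2)),
      Set.Ioc_union_Ioc_eq_Ioc h0 h1]
  have hsub : ∀ t₀ t₁ : ℝ, 0 ≤ t₀ → t₁ ≤ T → Set.Ioc t₀ t₁ ⊆ Set.Ioc 0 T :=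
    fun t₀ t₁ h0 h1 => Set.Ioc_subset_Ioc h0 h1
  -- G basics
  have hG0 : G 0 = 0 := by simp [hGdef]
  have hGmono : ∀ t₀ t₁, 0 ≤ t₀ → t₀ ≤ t₁ → t₁ ≤ T → G t₀ ≤ G t₁ := by
    intro t₀ t₁ h0 h1 h2
    rw [hGdef]
    simp only
    rw [hadd g hg t₀ t₁ h0 h1 h2]
    have : 0 ≤ ∫ s in Set.Ioc t₀ t₁, g s :=
      setIntegral_nonneg measurableSet_Ioc fun s _ => hgnn s
    linarith
  have hGcont : ContinuousOn G (Set.Icc 0 T) := by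
    apply intervalIntegral.continuousOn_primitive
    rwa [integrableOn_Icc_iff_integrableOn_Ioc]
  -- key step inequality
  have step : ∀ t₀ t₁ S, 0 ≤ t₀ → t₀ ≤ t₁ → t₁ ≤ T →
      (∀ s ∈ Set.Ioc t₀ t₁, 1 + φ s ≤ S) → φ t₁ - φ t₀ ≤ S * (G t₁ - G t₀) := by
    intro t₀ t₁ S h0 h1 h2 hS
    have hφdiff : φ t₁ - φ t₀ = ∫ s in Set.Ioc t₀ t₁, ψ s := by
      rw [heq t₁ ⟨by linarith, h2⟩, heq t₀ ⟨h0, by linarith⟩,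
        hadd ψ hψ t₀ t₁ h0 h1 h2]
      ring
    have hGdiff : G t₁ - G t₀ = ∫ s in Set.Ioc t₀ t₁, g s := by
      rw [hGdef]; simp only; rw [hadd g hg t₀ t₁ h0 h1 h2]; ring
    rw [hφdiff, hGdiff, ← integral_const_mul]
    apply integral_mono_ae (hψ.mono_set (hsub t₀ t₁ h0 h2))
      ((hg.mono_set (hsub t₀ t₁ h0 h2)).const_mul S)
    filter_upwards [ae_restrict_of_ae_restrict_of_subset (hsub t₀ t₁ h0 h2) hψle,
      ae_restrict_mem measurableSet_Ioc] with s hs1 hs2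
    calc ψ s ≤ g s * (1 + φ s) := hs1
      _ ≤ g s * S := mul_le_mul_of_nonneg_left (hS s hs2) (hgnn s)
      _ = S * g s := mul_comm _ _
  -- induction
  intro n
  induction n with
  | zero =>
    intro t ht hGt
    obtain ⟨t', ht', hmax⟩ := (isCompact_Icc : IsCompact (Set.Icc 0 t)).exists_isMaxOn
      (Set.nonempty_Icc.2 ht.1) (hφc.mono (Set.Icc_subset_Icc le_rfl ht.2))
    have hφ0' : 0 ≤ φ t' := hφ0 ▸ hmax (Set.left_mem_Icc.2 ht.1)
    have hs := step 0 t' (1 + φ t') le_rfl ht'.1 (ht'.2.trans ht.2)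
      (fun s hs => by
        have := hmax (Set.Ioc_subset_Icc_self.trans (Set.Icc_subset_Icc le_rfl ht'.2) hs)
        simpa using this)
    have hGt' : G t' ≤ 0 := le_trans (hGmono t' t ht'.1 ht'.2 ht.2) (by simpa using hGt)
    have hGt'0 : 0 ≤ G t' := by
      rw [← hG0]; exact hGmono 0 t' le_rfl ht'.1 (ht'.2.trans ht.2)
    have : φ t' - φ 0 ≤ (1 + φ t') * (G t' - G 0) := hs
    rw [hφ0, hG0] at this
    have hGt'eq : G t' = 0 := le_antisymm hGt' hGt'0
    have hφt : φ t ≤ φ t' := hmax (Set.right_mem_Icc.2 ht.1)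
    rw [hGt'eq] at this
    norm_num at this ⊢
    linarith
  | succ n ih =>
    intro t ht hGt
    obtain ⟨t', ht', hmax⟩ := (isCompact_Icc : IsCompact (Set.Icc 0 t)).exists_isMaxOn
      (Set.nonempty_Icc.2 ht.1) (hφc.mono (Set.Icc_subset_Icc le_rfl ht.2))
    have hmem : t' ∈ Set.Icc (0:ℝ) T := ⟨ht'.1, ht'.2.trans ht.2⟩
    have hφt : φ t ≤ φ t' := hmax (Set.right_mem_Icc.2 ht.1)
    have hφ0' : 0 ≤ φ t' := hφ0 ▸ hmax (Set.left_mem_Icc.2 ht.1)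
    by_cases hc : G t' ≤ n / 2
    · have := ih t' hmem hc
      have h2 : (2:ℝ) ^ (n + 1) ≤ 2 ^ (n + 2) := by
        apply pow_le_pow_right₀ (by norm_num) (by omega)
      linarith
    · push_neg at hc
      have hGIcc : ContinuousOn G (Set.Icc 0 t') :=
        hGcont.mono (Set.Icc_subset_Icc le_rfl hmem.2)
      have hiv : (n : ℝ) / 2 ∈ Set.Icc (G 0) (G t') := by
        rw [hG0]; exact ⟨by positivity, hc.le⟩
      obtain ⟨t₀, ht₀, hGt₀⟩ := intermediate_value_Icc ht'.1 hGIcc hiv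
      have ht₀T : t₀ ∈ Set.Icc (0:ℝ) T := ⟨ht₀.1, ht₀.2.trans hmem.2⟩
      have hih := ih t₀ ht₀T (le_of_eq hGt₀)
      have hGt' : G t' ≤ (↑n + 1) / 2 := by
        refine le_trans (hGmono t' t ht'.1 ht'.2 ht.2) ?_
        push_cast at hGt ⊢
        linarith
      have hs := step t₀ t' (1 + φ t') ht₀.1 ht₀.2 hmem.2
        (fun s hs => by
          have := hmax (Set.Ioc_subset_Icc_self.trans (Set.Icc_subset_Icc ht₀.1 ht'.2) hs)
          simpa using this)
      have hGd : G t' - G t₀ ≤ 1 / 2 := by rw [hGt₀]; push_cast; linarith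
      have hGd0 : 0 ≤ G t' - G t₀ := by
        have := hGmono t₀ t' ht₀.1 ht₀.2 hmem.2; linarith
      have hmul : (1 + φ t') * (G t' - G t₀) ≤ (1 + φ t') * (1 / 2) :=
        mul_le_mul_of_nonneg_left hGd (by linarith)
      have h2 : (2:ℝ) ^ (n + 2) = 2 * 2 ^ (n + 1) := by ring
      rw [h2]
      nlinarith

/-- A priori bound for skeleton solutions, uniform over controls of `L²`-norm at most `N`. -/
theorem skeleton_solution_apriori_bound
    (m d : ℕ) (T N Cb Cb' Cσ : ℝ) (hT : 0 < T) (hN : 0 < N)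
    (b : EuclideanSpace ℝ (Fin m) → EuclideanSpace ℝ (Fin m)) (hbc : Continuous b)
    (hb : ∀ x y, ⟪x - y, b x - b y⟫ ≤ Cb * ‖x - y‖ ^ 2)
    (hbgrowth : ∀ x, ‖b x‖ ≤ Cb' * (1 + ‖x‖))
    (σ : EuclideanSpace ℝ (Fin m) → (EuclideanSpace ℝ (Fin d) →L[ℝ] EuclideanSpace ℝ (Fin m)))
    (hσ : LipschitzWith (Real.toNNReal Cσ) σ)
    (O : Set (EuclideanSpace ℝ (Fin m))) (hne : O.Nonempty)
    (hclosed : IsClosed O) (hconv : Convex ℝ O)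
    (x : EuclideanSpace ℝ (Fin m)) (hxO : x ∈ O) :
    ∃ C : ℝ, ∀ (hdot : ℝ → EuclideanSpace ℝ (Fin d)),
      MemLp hdot 2 (volume.restrict (Set.Icc (0:ℝ) T)) →
      (∫ s in (0:ℝ)..T, ‖hdot s‖ ^ 2) ≤ N ^ 2 →
      ∀ (X k : ℝ → EuclideanSpace ℝ (Fin m)),
      (∀ t ∈ Set.Icc 0 T, X t ∈ O) →
      IntervalIntegrable (fun s => b (X s) + σ (X s) (hdot s) - k s) volume 0 T →
      X 0 = x →
      (∀ t ∈ Set.Icc 0 T, X t = x + ∫ s in (0:ℝ)..t, (b (X s) + σ (X s) (hdot s) - k s)) →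
      (∀ᵐ t ∂(volume.restrict (Set.Icc (0:ℝ) T)), ∀ z ∈ O, ⟪k t, X t - z⟫ ≥ 0) →
      ∀ t ∈ Set.Icc 0 T, ‖X t‖ ≤ C := by
  set a : ℝ := 2 * |Cb| + 2 * ‖b x‖ + 1 with ha
  set c : ℝ := 2 * ((Real.toNNReal Cσ : ℝ) + ‖σ x‖) with hc
  set A : ℝ := a * T + c * (T / 2 + N ^ 2 / 2) with hA
  have ha1 : 1 ≤ a := by
    have := abs_nonneg Cb; have := norm_nonneg (b x); rw [ha]; linarith
  have hc0 : 0 ≤ c := by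
    have := (Real.toNNReal Cσ).2; have := norm_nonneg (σ x); rw [hc]; positivity
  refine ⟨‖x‖ + 2 ^ (⌈2 * A⌉₊ + 1), ?_⟩
  intro hdot hmem hL2 X k hXO hfint hX0 hX hk
  set f : ℝ → EuclideanSpace ℝ (Fin m) := fun s => b (X s) + σ (X s) (hdot s) - k s with hfdef
  have hfI : IntegrableOn f (Set.Ioc 0 T) :=
    (intervalIntegrable_iff_integrableOn_Ioc_of_le hT.le).mp hfint
  set u : ℝ → EuclideanSpace ℝ (Fin m) := fun τ => ∫ s in Set.Ioc 0 τ, f s with hudef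
  have hXu : ∀ τ ∈ Set.Icc (0:ℝ) T, X τ - x = u τ := by
    intro τ hτ
    rw [hX τ hτ, hudef]
    simp only
    rw [intervalIntegral.integral_of_le hτ.1]
    abel
  set φ : ℝ → ℝ := fun τ => ‖u τ‖ ^ 2 with hφdef
  set ψ : ℝ → ℝ := fun s => 2 * ⟪f s, u s⟫ with hψdef
  set g : ℝ → ℝ := fun s => a + c * ‖hdot s‖ with hgdef
  -- continuity of φ
  have hucont : ContinuousOn u (Set.Icc 0 T) :=
    intervalIntegral.continuousOn_primitive ((integrableOn_Icc_iff_integrableOn_Ioc).mpr hfI)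
  have hφc : ContinuousOn φ (Set.Icc 0 T) := (hucont.norm).pow 2
  have hφ0 : φ 0 = 0 := by simp [hφdef, hudef, Set.Ioc_self]
  -- the energy identity
  have heq : ∀ τ ∈ Set.Icc (0:ℝ) T, φ τ = ∫ s in Set.Ioc 0 τ, ψ s := by
    intro τ hτ
    have := (energy_identity f τ (hfI.mono_set (Set.Ioc_subset_Ioc le_rfl hτ.2))).2
    rw [hφdef, hψdef]
    simp only
    rw [integral_const_mul]
    exact this
  have hψI : IntegrableOn ψ (Set.Ioc 0 T) := by
    have := (energy_identity f T hfI).1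
    exact this.const_mul 2
  -- integrability of g
  haveI : IsFiniteMeasure (volume.restrict (Set.Icc (0:ℝ) T)) :=
    ⟨by rw [Measure.restrict_apply_univ]; exact measure_Icc_lt_top⟩
  have hint1 : Integrable hdot (volume.restrict (Set.Icc (0:ℝ) T)) := hmem.integrable one_le_two
  have hnormIcc : IntegrableOn (fun s => ‖hdot s‖) (Set.Icc 0 T) := hint1.norm
  have hnormI : IntegrableOn (fun s => ‖hdot s‖) (Set.Ioc 0 T) :=
    hnormIcc.mono_set Set.Ioc_subset_Icc_self
  have hsqIcc : IntegrableOn (fun s => ‖hdot s‖ ^ 2) (Set.Icc 0 T) := hmem.norm.integrable_sq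
  have hsqI : IntegrableOn (fun s => ‖hdot s‖ ^ 2) (Set.Ioc 0 T) :=
    hsqIcc.mono_set Set.Ioc_subset_Icc_self
  have hgI : IntegrableOn g (Set.Ioc 0 T) := by
    refine Integrable.add ?_ (hnormI.const_mul c)
    exact (integrableOn_const_iff).mpr (Or.inr measure_Ioc_lt_top)
  have hgnn : ∀ s, 0 ≤ g s := by
    intro s
    have h1 : (0:ℝ) ≤ c * ‖hdot s‖ := mul_nonneg hc0 (norm_nonneg _)
    rw [hgdef]; simp only; linarith
  -- pointwise a.e. bound
  have hψle : ∀ᵐ s ∂(volume.restrict (Set.Ioc 0 T)), ψ s ≤ g s * (1 + φ s) := by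
    have hk' : ∀ᵐ s ∂(volume.restrict (Set.Ioc (0:ℝ) T)), ∀ z ∈ O, ⟪k s, X s - z⟫ ≥ 0 :=
      ae_restrict_of_ae_restrict_of_subset Set.Ioc_subset_Icc_self hk
    filter_upwards [hk', ae_restrict_mem measurableSet_Ioc] with s hks hsmem
    have hsIcc : s ∈ Set.Icc (0:ℝ) T := Set.Ioc_subset_Icc_self hsmem
    have hus : u s = X s - x := (hXu s hsIcc).symm
    set v : EuclideanSpace ℝ (Fin m) := X s - x with hvdef
    have hφs : φ s = ‖v‖ ^ 2 := by rw [hφdef]; simp only; rw [hus]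
    have hfs : f s = ((b (X s) - b x) + b x + σ (X s) (hdot s)) - k s := by
      rw [hfdef]; simp only; abel
    have e1 : ψ s = 2 * (⟪b (X s) - b x, v⟫ + ⟪b x, v⟫ + ⟪σ (X s) (hdot s), v⟫ - ⟪k s, v⟫) := by
      rw [hψdef]; simp only; rw [hus, hfs, inner_sub_left, inner_add_left, inner_add_left]
    have hb1 : ⟪b (X s) - b x, v⟫ ≤ |Cb| * ‖v‖ ^ 2 := by
      have h1 : ⟪X s - x, b (X s) - b x⟫ ≤ Cb * ‖X s - x‖ ^ 2 := hb (X s) x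
      rw [real_inner_comm] at h1
      refine h1.trans ?_
      exact mul_le_mul_of_nonneg_right (le_abs_self Cb) (sq_nonneg _)
    have hb2 : ⟪b x, v⟫ ≤ ‖b x‖ * ‖v‖ := real_inner_le_norm _ _
    have hσn : ‖σ (X s)‖ ≤ ‖σ x‖ + (Real.toNNReal Cσ : ℝ) * ‖v‖ := by
      have h1 := hσ.dist_le_mul (X s) x
      rw [dist_eq_norm, dist_eq_norm] at h1
      have h2 : ‖σ (X s)‖ - ‖σ x‖ ≤ ‖σ (X s) - σ x‖ := norm_sub_norm_le _ _
      linarith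
    have hs2 : ⟪σ (X s) (hdot s), v⟫ ≤ (‖σ x‖ + (Real.toNNReal Cσ : ℝ) * ‖v‖) * (‖hdot s‖ * ‖v‖) := by
      calc ⟪σ (X s) (hdot s), v⟫ ≤ ‖σ (X s) (hdot s)‖ * ‖v‖ := real_inner_le_norm _ _
        _ ≤ (‖σ (X s)‖ * ‖hdot s‖) * ‖v‖ :=
          mul_le_mul_of_nonneg_right (ContinuousLinearMap.le_opNorm _ _) (norm_nonneg _)
        _ ≤ ((‖σ x‖ + (Real.toNNReal Cσ : ℝ) * ‖v‖) * ‖hdot s‖) * ‖v‖ :=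
          mul_le_mul_of_nonneg_right
            (mul_le_mul_of_nonneg_right hσn (norm_nonneg _)) (norm_nonneg _)
        _ = (‖σ x‖ + (Real.toNNReal Cσ : ℝ) * ‖v‖) * (‖hdot s‖ * ‖v‖) := by ring
    have hk3 : 0 ≤ ⟪k s, v⟫ := hks x hxO
    have hnv : ‖v‖ ≤ 1 + ‖v‖ ^ 2 := by nlinarith [sq_nonneg (‖v‖ - 1)]
    have hgs : g s = a + c * ‖hdot s‖ := rfl
    have hq0 : (0:ℝ) ≤ 1 + ‖v‖ ^ 2 := by positivity
    have hsq : ‖v‖ ^ 2 ≤ 1 + ‖v‖ ^ 2 := by linarith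
    have hCσ0 : (0:ℝ) ≤ (Real.toNNReal Cσ : ℝ) := (Real.toNNReal Cσ).2
    have q1 : 2 * |Cb| * ‖v‖ ^ 2 ≤ 2 * |Cb| * (1 + ‖v‖ ^ 2) :=
      mul_le_mul_of_nonneg_left hsq (by positivity)
    have q2 : 2 * ‖b x‖ * ‖v‖ ≤ 2 * ‖b x‖ * (1 + ‖v‖ ^ 2) :=
      mul_le_mul_of_nonneg_left hnv (by positivity)
    have q3 : 2 * (‖σ x‖ * ‖hdot s‖) * ‖v‖ ≤ 2 * (‖σ x‖ * ‖hdot s‖) * (1 + ‖v‖ ^ 2) :=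
      mul_le_mul_of_nonneg_left hnv (by positivity)
    have q4 : 2 * ((Real.toNNReal Cσ : ℝ) * ‖hdot s‖) * ‖v‖ ^ 2
        ≤ 2 * ((Real.toNNReal Cσ : ℝ) * ‖hdot s‖) * (1 + ‖v‖ ^ 2) :=
      mul_le_mul_of_nonneg_left hsq (by positivity)
    rw [e1, hφs, hgs, ha, hc]
    linarith [hb1, hb2, hs2, hk3, q1, q2, q3, q4, hq0]
  -- apply Gronwall
  have key := gronwall_aux φ g ψ T hT.le hφc hφ0 hgI hgnn hψI hψle heq (⌈2 * A⌉₊)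
  intro t ht
  have hGT : (∫ s in Set.Ioc 0 t, g s) ≤ (⌈2 * A⌉₊ : ℝ) / 2 := by
    have h1 : (∫ s in Set.Ioc 0 t, g s) ≤ ∫ s in Set.Ioc 0 T, g s := by
      apply setIntegral_mono_set hgI
      · exact Filter.Eventually.of_forall fun s => hgnn s
      · exact HasSubset.Subset.eventuallyLE (Set.Ioc_subset_Ioc le_rfl ht.2)
    have h2 : (∫ s in Set.Ioc 0 T, g s) = a * T + c * ∫ s in Set.Ioc 0 T, ‖hdot s‖ := by
      rw [hgdef]
      simp only
      rw [integral_add ((integrableOn_const_iff (C := a)).mpr (Or.inr measure_Ioc_lt_top))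
        (hnormI.const_mul c), setIntegral_const, integral_const_mul, smul_eq_mul,
        Real.volume_real_Ioc_of_le hT.le]
      ring
    have h4 : (∫ s in Set.Ioc 0 T, ‖hdot s‖) ≤ ∫ s in Set.Ioc 0 T, (1 + ‖hdot s‖ ^ 2) / 2 := by
      apply integral_mono hnormI
      · exact (((integrableOn_const_iff).mpr (Or.inr measure_Ioc_lt_top)).add hsqI).div_const 2
      · intro s
        have h := sq_nonneg (‖hdot s‖ - 1)
        simp only
        nlinarith
    have h5 : (∫ s in Set.Ioc 0 T, (1 + ‖hdot s‖ ^ 2) / 2)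
        = (T + ∫ s in Set.Ioc 0 T, ‖hdot s‖ ^ 2) / 2 := by
      rw [integral_div, integral_add ((integrableOn_const_iff (C := (1:ℝ))).mpr (Or.inr measure_Ioc_lt_top)) hsqI,
        setIntegral_const, smul_eq_mul, Real.volume_real_Ioc_of_le hT.le,
        mul_one, sub_zero]
    have h6 : (∫ s in Set.Ioc 0 T, ‖hdot s‖ ^ 2) ≤ N ^ 2 := by
      rwa [intervalIntegral.integral_of_le hT.le] at hL2
    have h8 : 2 * A ≤ (⌈2 * A⌉₊ : ℝ) := Nat.le_ceil _
    have h9 : (∫ s in Set.Ioc 0 T, ‖hdot s‖) ≤ T / 2 + N ^ 2 / 2 := by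
      rw [h5] at h4; linarith
    have h10 : c * (∫ s in Set.Ioc 0 T, ‖hdot s‖) ≤ c * (T / 2 + N ^ 2 / 2) :=
      mul_le_mul_of_nonneg_left h9 hc0
    have hAT : (∫ s in Set.Ioc 0 T, g s) ≤ A := by rw [h2, hA]; linarith
    linarith [h1, hAT, h8]
  have hfinal := key t ht hGT
  have hXt : X t - x = u t := hXu t ht
  have hφt : ‖X t - x‖ ^ 2 = φ t := by rw [hφdef]; simp only; rw [hXt]
  have h2n : (1:ℝ) ≤ 2 ^ (⌈2 * A⌉₊ + 1) := one_le_pow₀ (by norm_num)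
  have hnb : ‖X t - x‖ ≤ 2 ^ (⌈2 * A⌉₊ + 1) := by
    nlinarith [norm_nonneg (X t - x), sq_nonneg (‖X t - x‖ - 1), hφt ▸ hfinal]
  have hXeq : X t = x + (X t - x) := by abel
  calc ‖X t‖ = ‖x + (X t - x)‖ := by rw [← hXeq]
    _ ≤ ‖x‖ + ‖X t - x‖ := norm_add_le _ _
    _ ≤ ‖x‖ + 2 ^ (⌈2 * A⌉₊ + 1) := by linarith
end

section
/- Let A be a monotone operator on ℝ^m and suppose a ∈ ℝ^m and γ > 0 are such that for every z ∈ ℝ^m with |z − a| ≤ γ there exists w ∈ A(z) (i.e., B(a,γ) ⊆ D(A)) and sup{|w| : w ∈ A(z), |z − a| ≤ γ} ≤ μ for some μ ≥ 0. Then for all (x, y) ∈ Gr(A): ⟨x − a, y⟩ ≥ γ|y| − μ|x − a| − γμ. -/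
open RealInnerProductSpace

/-- Cépa's coercivity inequality (11), pointwise form: if a monotone operator `A`
has `B(a,γ) ⊆ D(A)` with values bounded by `μ` there, then
`⟪x − a, y⟫ ≥ γ|y| − μ|x − a| − γμ` on the graph of `A`. -/
theorem monotone_interior_coercivity
    (m : ℕ) (A : EuclideanSpace ℝ (Fin m) → Set (EuclideanSpace ℝ (Fin m)))
    (hmono : ∀ x₁ x₂ y₁ y₂, y₁ ∈ A x₁ → y₂ ∈ A x₂ → ⟪y₁ - y₂, x₁ - x₂⟫ ≥ 0)
    (a : EuclideanSpace ℝ (Fin m)) (γ μ : ℝ) (hγ : 0 < γ) (hμ : 0 ≤ μ)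
    (hdom : ∀ z : EuclideanSpace ℝ (Fin m), ‖z - a‖ ≤ γ → (A z).Nonempty)
    (hbdd : ∀ z w : EuclideanSpace ℝ (Fin m), ‖z - a‖ ≤ γ → w ∈ A z → ‖w‖ ≤ μ)
    (x y : EuclideanSpace ℝ (Fin m)) (hxy : y ∈ A x) :
    ⟪x - a, y⟫ ≥ γ * ‖y‖ - μ * ‖x - a‖ - γ * μ := by
  by_cases hy : y = 0
  · subst hy
    simp only [inner_zero_right, norm_zero, mul_zero]
    nlinarith [norm_nonneg (x - a)]
  · have hny : 0 < ‖y‖ := norm_pos_iff.mpr hy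
    set z : EuclideanSpace ℝ (Fin m) := a + (γ / ‖y‖) • y with hz
    have hza : z - a = (γ / ‖y‖) • y := by simp [hz]
    have hnz : ‖z - a‖ = γ := by
      rw [hza, norm_smul, Real.norm_eq_abs, abs_of_pos (div_pos hγ hny)]
      field_simp
    obtain ⟨w, hw⟩ := hdom z (le_of_eq hnz)
    have hwμ : ‖w‖ ≤ μ := hbdd z w (le_of_eq hnz) hw
    have hm := hmono x z y w hxy hw
    -- ⟪y - w, x - z⟫ ≥ 0
    have hxz : x - z = (x - a) - (z - a) := by abel
    have hexp : ⟪y - w, x - z⟫ =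
        ⟪y, x - a⟫ - ⟪y, z - a⟫ - ⟪w, x - a⟫ + ⟪w, z - a⟫ := by
      rw [hxz]
      simp [inner_sub_left, inner_sub_right]
      ring
    have h1 : ⟪y, z - a⟫ = γ * ‖y‖ := by
      rw [hza, real_inner_smul_right, real_inner_self_eq_norm_sq]
      field_simp
    have h2 : -(μ * ‖x - a‖) ≤ ⟪w, x - a⟫ := by
      have := abs_real_inner_le_norm w (x - a)
      have hle : ‖w‖ * ‖x - a‖ ≤ μ * ‖x - a‖ :=
        mul_le_mul_of_nonneg_right hwμ (norm_nonneg _)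
      nlinarith [abs_le.mp (this.trans hle)]
    have h3 : ⟪w, z - a⟫ ≤ μ * γ := by
      calc ⟪w, z - a⟫ ≤ ‖w‖ * ‖z - a‖ := real_inner_le_norm _ _
        _ ≤ μ * γ := by rw [hnz]; exact mul_le_mul_of_nonneg_right hwμ hγ.le
    have hcomm : ⟪x - a, y⟫ = ⟪y, x - a⟫ := real_inner_comm _ _
    nlinarith [hm, hexp, h1, h2, h3]
end
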